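/- arXiv:0711.4325 — 4 statements merged into one kernel-verified Lean document; each statement's English description precedes it below -/
import Mathlib

section
/- For every pattern q of length 3 and every positive integer n, the number of permutations of length n avoiding q (as a classical pattern) equals the n-th Catalan number C_n = binomial(2n, n)/(n+1). -/
/-- `p` contains the pattern `q` (classical, non-consecutive sense). -/
def PermContains {n k : ℕ} (p : Equiv.Perm (Fin n)) (q : Equiv.Perm (Fin k)) : Prop :=
  ∃ f : Fin k ↪o Fin n, ∀ j r : Fin k, q j < q r ↔ p (f j) < p (f r)

/-- `p` avoids the pattern `q`. -/
def PermAvoids {n k : ℕ} (p : Equiv.Perm (Fin n)) (q : Equiv.Perm (Fin k)) : Prop :=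
  ¬ PermContains p q

/-- `S n q` is the number of permutations of length `n` avoiding the pattern `q`. -/
noncomputable def S (n : ℕ) {k : ℕ} (q : Equiv.Perm (Fin k)) : ℕ :=
  Nat.card {p : Equiv.Perm (Fin n) // PermAvoids p q}

namespace PatAux
open List Finset

def Has132 (l : List ℕ) : Prop := ∃ a b c : ℕ, [a,b,c] <+ l ∧ a < c ∧ c < b
def Has123 (l : List ℕ) : Prop := ∃ a b c : ℕ, [a,b,c] <+ l ∧ a < b ∧ b < c
def Has213 (l : List ℕ) : Prop := ∃ a b c : ℕ, [a,b,c] <+ l ∧ b < a ∧ a < c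
def Has231 (l : List ℕ) : Prop := ∃ a b c : ℕ, [a,b,c] <+ l ∧ c < a ∧ a < b
def Has312 (l : List ℕ) : Prop := ∃ a b c : ℕ, [a,b,c] <+ l ∧ b < c ∧ c < a
def Has321 (l : List ℕ) : Prop := ∃ a b c : ℕ, [a,b,c] <+ l ∧ c < b ∧ b < a

/-- no pair x<y (in order) with both above m -/
def NoRise (m : ℕ) (l : List ℕ) : Prop := ¬ ∃ x y : ℕ, [x,y] <+ l ∧ m < x ∧ x < y
/-- no pair x>y (in order) with y above m -/
def NoFall (m : ℕ) (l : List ℕ) : Prop := ¬ ∃ x y : ℕ, [x,y] <+ l ∧ m < y ∧ y < x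

theorem Has132.mono {l l' : List ℕ} (h : Has132 l) (hs : l <+ l') : Has132 l' := by
  obtain ⟨a,b,c,h1,h2⟩ := h; exact ⟨a,b,c,h1.trans hs,h2⟩
theorem Has123.mono {l l' : List ℕ} (h : Has123 l) (hs : l <+ l') : Has123 l' := by
  obtain ⟨a,b,c,h1,h2⟩ := h; exact ⟨a,b,c,h1.trans hs,h2⟩
theorem NoRise.mono {m : ℕ} {l l' : List ℕ} (h : NoRise m l') (hs : l <+ l') : NoRise m l := by
  rintro ⟨x,y,h1,h2⟩; exact h ⟨x,y,h1.trans hs,h2⟩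
theorem NoFall.mono {m : ℕ} {l l' : List ℕ} (h : NoFall m l') (hs : l <+ l') : NoFall m l := by
  rintro ⟨x,y,h1,h2⟩; exact h ⟨x,y,h1.trans hs,h2⟩

theorem pair_cons {x y a : ℕ} {l : List ℕ} :
    [x,y] <+ a :: l ↔ [x,y] <+ l ∨ (x = a ∧ y ∈ l) := by
  rw [sublist_cons_iff]
  constructor
  · rintro (h | ⟨r, hr, hrs⟩)
    · exact Or.inl h
    · obtain ⟨rfl, rfl⟩ : x = a ∧ r = [y] := by
        constructor
        · exact (List.cons.injEq _ _ _ _ ▸ hr).1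
        · exact (List.cons.injEq _ _ _ _ ▸ hr).2.symm
      exact Or.inr ⟨rfl, (singleton_sublist.mp hrs)⟩
  · rintro (h | ⟨rfl, hy⟩)
    · exact Or.inl h
    · exact Or.inr ⟨[y], rfl, singleton_sublist.mpr hy⟩

theorem triple_cons {x y z a : ℕ} {l : List ℕ} :
    [x,y,z] <+ a :: l ↔ [x,y,z] <+ l ∨ (x = a ∧ [y,z] <+ l) := by
  rw [sublist_cons_iff]
  constructor
  · rintro (h | ⟨r, hr, hrs⟩)
    · exact Or.inl h
    · injection hr with h1 h2
      subst h1; subst h2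
      exact Or.inr ⟨rfl, hrs⟩
  · rintro (h | ⟨rfl, hy⟩)
    · exact Or.inl h
    · exact Or.inr ⟨[y,z], rfl, hy⟩

theorem has132_cons {a : ℕ} {l : List ℕ} :
    Has132 (a :: l) ↔ Has132 l ∨ ∃ y z : ℕ, [y,z] <+ l ∧ a < z ∧ z < y := by
  constructor
  · rintro ⟨x,y,z,hs,h1,h2⟩
    rcases triple_cons.mp hs with h | ⟨rfl, h⟩
    · exact Or.inl ⟨x,y,z,h,h1,h2⟩
    · exact Or.inr ⟨y,z,h,h1,h2⟩
  · rintro (h | ⟨y,z,hs,h1,h2⟩)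
    · exact h.mono (sublist_cons_self a l)
    · exact ⟨a,y,z, hs.cons₂ a, h1, h2⟩

theorem has123_cons {a : ℕ} {l : List ℕ} :
    Has123 (a :: l) ↔ Has123 l ∨ ∃ y z : ℕ, [y,z] <+ l ∧ a < y ∧ y < z := by
  constructor
  · rintro ⟨x,y,z,hs,h1,h2⟩
    rcases triple_cons.mp hs with h | ⟨rfl, h⟩
    · exact Or.inl ⟨x,y,z,h,h1,h2⟩
    · exact Or.inr ⟨y,z,h,h1,h2⟩
  · rintro (h | ⟨y,z,hs,h1,h2⟩)
    · exact h.mono (sublist_cons_self a l)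
    · exact ⟨a,y,z, hs.cons₂ a, h1, h2⟩

theorem noFall_cons {m a : ℕ} {l : List ℕ} :
    NoFall m (a :: l) ↔ NoFall m l ∧ ∀ y ∈ l, m < y → ¬ y < a := by
  constructor
  · intro h
    refine ⟨h.mono (sublist_cons_self a l), fun y hy h1 h2 => h ⟨a, y, ?_, h1, h2⟩⟩
    exact pair_cons.mpr (Or.inr ⟨rfl, hy⟩)
  · rintro ⟨h1, h2⟩ ⟨x,y,hs,hx1,hx2⟩
    rcases pair_cons.mp hs with h | ⟨rfl, hy⟩
    · exact h1 ⟨x,y,h,hx1,hx2⟩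
    · exact h2 y hy hx1 hx2

theorem noRise_cons {m a : ℕ} {l : List ℕ} :
    NoRise m (a :: l) ↔ NoRise m l ∧ ∀ y ∈ l, m < a → ¬ a < y := by
  constructor
  · intro h
    refine ⟨h.mono (sublist_cons_self a l), fun y hy h1 h2 => h ⟨a, y, ?_, h1, h2⟩⟩
    exact pair_cons.mpr (Or.inr ⟨rfl, hy⟩)
  · rintro ⟨h1, h2⟩ ⟨x,y,hs,hx1,hx2⟩
    rcases pair_cons.mp hs with h | ⟨rfl, hy⟩
    · exact h1 ⟨x,y,h,hx1,hx2⟩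
    · exact h2 y hy hx1 hx2



def mins (m : ℕ) : List ℕ → List ℕ
  | [] => []
  | a :: l => if a < m then a :: mins a l else mins m l

def nonmins (m : ℕ) : List ℕ → List ℕ
  | [] => []
  | a :: l => if a < m then nonmins a l else a :: nonmins m l

def cfg (m : ℕ) : List ℕ → List (Option ℕ)
  | [] => []
  | a :: l => if a < m then some a :: cfg a l else none :: cfg m l

theorem mins_sublist (m : ℕ) (l : List ℕ) : mins m l <+ l := by
  induction l generalizing m with
  | nil => simp [mins]
  | cons a l ih =>
    rw [mins]
    split
    · exact (ih a).cons₂ a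
    · exact (ih m).cons a

theorem nonmins_sublist (m : ℕ) (l : List ℕ) : nonmins m l <+ l := by
  induction l generalizing m with
  | nil => simp [nonmins]
  | cons a l ih =>
    rw [nonmins]
    split
    · exact (ih a).cons a
    · exact (ih m).cons₂ a

theorem mem_mins_lt {m x : ℕ} {l : List ℕ} (h : x ∈ mins m l) : x < m := by
  induction l generalizing m with
  | nil => simp [mins] at h
  | cons a l ih =>
    rw [mins] at h
    split at h
    · rcases mem_cons.mp h with rfl | h
      · assumption
      · exact (ih h).trans (by assumption)
    · exact ih h

theorem mins_nonmins_perm (m : ℕ) (l : List ℕ) : mins m l ++ nonmins m l ~ l := by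
  induction l generalizing m with
  | nil => simp [mins, nonmins]
  | cons a l ih =>
    rw [mins, nonmins]
    split
    · simpa using (ih a).cons a
    · exact (List.perm_middle).trans ((ih m).cons a)

theorem cfg_length (m : ℕ) (l : List ℕ) : (cfg m l).length = l.length := by
  induction l generalizing m with
  | nil => simp [cfg]
  | cons a l ih => rw [cfg]; split <;> simp [ih]

theorem cfg_eq_nil {m : ℕ} {l : List ℕ} (h : cfg m l = []) : l = [] := by
  cases l with
  | nil => rfl
  | cons a l => rw [cfg] at h; split at h <;> simp at h

noncomputable def fillLo (m : ℕ) (R : Finset ℕ) : List ℕ → List ℕ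
  | [] => []
  | a :: l =>
    if a < m then a :: fillLo a (R.erase a) l
    else if h : (R.filter (fun x => m < x)).Nonempty then
      ((R.filter (fun x => m < x)).min' h) :: fillLo m (R.erase ((R.filter (fun x => m < x)).min' h)) l
    else a :: fillLo m (R.erase a) l

noncomputable def fillHi (m : ℕ) (R : Finset ℕ) : List ℕ → List ℕ
  | [] => []
  | a :: l =>
    if a < m then a :: fillHi a (R.erase a) l
    else if h : (R.filter (fun x => m < x)).Nonempty then
      ((R.filter (fun x => m < x)).max' h) :: fillHi m (R.erase ((R.filter (fun x => m < x)).max' h)) l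
    else a :: fillHi m (R.erase a) l

/-- the running invariant for the fill functions -/
structure Inv (m : ℕ) (R : Finset ℕ) (σ : List ℕ) : Prop where
  nodup : σ.Nodup
  nm : ∀ x ∈ σ, x ≠ m
  mR : m ∉ R
  minsub : (mins m σ).toFinset ⊆ R
  card : R.card = σ.length
  gam : (R \ (mins m σ).toFinset).filter (· < m)
      = ((nonmins m σ).toFinset).filter (· < m)
  jcard : ((R \ (mins m σ).toFinset).filter (m < ·)).card
      = (((nonmins m σ).toFinset).filter (m < ·)).card



theorem filter_split {m a : ℕ} (S : Finset ℕ) (hm : m ∉ S) (ham : a < m) :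
    (S.filter (a < ·)).card
      = ((S.filter (· < m)).filter (a < ·)).card + (S.filter (m < ·)).card := by
  rw [Finset.filter_filter]
  rw [← Finset.card_union_of_disjoint]
  · congr 1
    ext x
    simp only [Finset.mem_filter, Finset.mem_union]
    constructor
    · rintro ⟨hx, h2⟩
      have : x ≠ m := fun h => hm (h ▸ hx)
      rcases lt_or_gt_of_ne this with h | h
      · exact Or.inl ⟨hx, h, h2⟩
      · exact Or.inr ⟨hx, h⟩
    · rintro (⟨hx, h1, h2⟩ | ⟨hx, h1⟩)
      · exact ⟨hx, h2⟩
      · exact ⟨hx, ham.trans h1⟩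
  · rw [Finset.disjoint_filter]
    rintro x - ⟨h1, -⟩ h2
    omega

theorem Inv.min_step {m a : ℕ} {R : Finset ℕ} {l : List ℕ}
    (h : Inv m R (a :: l)) (ham : a < m) : Inv a (R.erase a) l := by
  have hmins : mins m (a :: l) = a :: mins a l := by rw [mins, if_pos ham]
  have hnon : nonmins m (a :: l) = nonmins a l := by rw [nonmins, if_pos ham]
  have haR : a ∈ R := h.minsub (by simp [hmins])
  have hanotl : a ∉ l := (List.nodup_cons.mp h.nodup).1
  have hW : (R.erase a) \ (mins a l).toFinset = R \ (mins m (a :: l)).toFinset := by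
    ext x
    simp only [hmins, Finset.mem_sdiff, Finset.mem_erase, List.toFinset_cons,
      Finset.mem_insert, not_or]
    tauto
  have hNm : m ∉ (nonmins a l).toFinset := by
    simp only [List.mem_toFinset]
    intro hx
    exact (h.nm m (List.mem_cons_of_mem a ((nonmins_sublist a l).mem hx))) rfl
  have hWm : m ∉ (R.erase a) \ (mins a l).toFinset := by
    simp only [Finset.mem_sdiff, Finset.mem_erase]
    rintro ⟨⟨-, hm⟩, -⟩
    exact h.mR hm
  refine ⟨(List.nodup_cons.mp h.nodup).2, fun x hx => fun hxa => hanotl (hxa ▸ hx),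
    Finset.notMem_erase a R, ?_, ?_, ?_, ?_⟩
  · intro x hx
    simp only [List.mem_toFinset] at hx
    have hxa : x < a := mem_mins_lt hx
    exact Finset.mem_erase.mpr ⟨hxa.ne, h.minsub (by simp [hmins, hx])⟩
  · rw [Finset.card_erase_of_mem haR, h.card]; rfl
  · -- gam
    rw [hW]
    have := h.gam
    rw [hnon] at this
    ext x
    have hx := Finset.ext_iff.mp this x
    simp only [Finset.mem_filter] at hx ⊢
    constructor
    · rintro ⟨h1, h2⟩
      exact ⟨(hx.mp ⟨h1, h2.trans ham⟩).1, h2⟩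
    · rintro ⟨h1, h2⟩
      exact ⟨(hx.mpr ⟨h1, h2.trans ham⟩).1, h2⟩
  · -- jcard
    rw [hW]
    set W := R \ (mins m (a :: l)).toFinset with hWdef
    set N := (nonmins a l).toFinset with hNdef
    have hWm' : m ∉ W := by
      simp only [hWdef, Finset.mem_sdiff]; rintro ⟨hm, -⟩; exact h.mR hm
    rw [filter_split W hWm' ham, filter_split N hNm ham]
    have hg := h.gam
    rw [hnon] at hg
    rw [hg]
    have hj := h.jcard
    rw [hnon] at hj
    rw [hj]

theorem Inv.fill_step {m a b : ℕ} {R : Finset ℕ} {l : List ℕ}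
    (h : Inv m R (a :: l)) (ham : ¬ a < m) (hb : b ∈ R.filter (fun x => m < x)) :
    Inv m (R.erase b) l := by
  have hmins : mins m (a :: l) = mins m l := by rw [mins, if_neg ham]
  have hnon : nonmins m (a :: l) = a :: nonmins m l := by rw [nonmins, if_neg ham]
  obtain ⟨hbR, hbm⟩ := Finset.mem_filter.mp hb
  have hma : m < a := lt_of_le_of_ne (not_lt.mp ham) (Ne.symm (h.nm a (List.mem_cons_self)))
  have hanotl : a ∉ l := (List.nodup_cons.mp h.nodup).1
  have hbM : b ∉ (mins m l).toFinset := by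
    simp only [List.mem_toFinset]
    intro hx; exact absurd (mem_mins_lt hx) (by omega)
  have hW : (R.erase b) \ (mins m l).toFinset = (R \ (mins m (a::l)).toFinset).erase b := by
    rw [hmins]; ext x
    simp only [Finset.mem_sdiff, Finset.mem_erase]
    tauto
  have hN : (nonmins m l).toFinset = ((nonmins m (a::l)).toFinset).erase a := by
    rw [hnon, List.toFinset_cons, Finset.erase_insert]
    simp only [List.mem_toFinset]
    intro hx; exact hanotl ((nonmins_sublist m l).mem hx)
  refine ⟨(List.nodup_cons.mp h.nodup).2, fun x hx => h.nm x (List.mem_cons_of_mem a hx),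
    fun hm => h.mR (Finset.mem_of_mem_erase hm), ?_, ?_, ?_, ?_⟩
  · intro x hx
    simp only [List.mem_toFinset] at hx
    have : x < m := mem_mins_lt hx
    exact Finset.mem_erase.mpr ⟨by omega, h.minsub (by simp [hmins]; exact List.mem_toFinset.mp (by simp [hx]))⟩
  · rw [Finset.card_erase_of_mem hbR, h.card]; rfl
  · rw [hW, hN]
    have : ((R \ (mins m (a::l)).toFinset).erase b).filter (· < m)
        = (R \ (mins m (a::l)).toFinset).filter (· < m) := by
      ext x
      simp only [Finset.mem_filter, Finset.mem_erase]
      constructor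
      · rintro ⟨⟨-, h1⟩, h2⟩; exact ⟨h1, h2⟩
      · rintro ⟨h1, h2⟩; exact ⟨⟨by omega, h1⟩, h2⟩
    rw [this]
    have : (((nonmins m (a::l)).toFinset).erase a).filter (· < m)
        = ((nonmins m (a::l)).toFinset).filter (· < m) := by
      ext x
      simp only [Finset.mem_filter, Finset.mem_erase]
      constructor
      · rintro ⟨⟨-, h1⟩, h2⟩; exact ⟨h1, h2⟩
      · rintro ⟨h1, h2⟩; exact ⟨⟨by omega, h1⟩, h2⟩
    rw [this, h.gam]
  · rw [hW, hN]
    have e1 : ((R \ (mins m (a::l)).toFinset).erase b).filter (m < ·)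
        = ((R \ (mins m (a::l)).toFinset).filter (m < ·)).erase b := by
      ext x
      simp only [Finset.mem_filter, Finset.mem_erase]
      tauto
    have e2 : (((nonmins m (a::l)).toFinset).erase a).filter (m < ·)
        = (((nonmins m (a::l)).toFinset).filter (m < ·)).erase a := by
      ext x
      simp only [Finset.mem_filter, Finset.mem_erase]
      tauto
    rw [e1, e2, Finset.card_erase_of_mem, Finset.card_erase_of_mem, h.jcard]
    · simp only [Finset.mem_filter, List.mem_toFinset, hnon]
      exact ⟨List.mem_cons_self, hma⟩
    · simp only [Finset.mem_filter, Finset.mem_sdiff]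
      rw [hmins]
      exact ⟨⟨hbR, hbM⟩, hbm⟩

theorem Inv.fill_nonempty {m a : ℕ} {R : Finset ℕ} {l : List ℕ}
    (h : Inv m R (a :: l)) (ham : ¬ a < m) : (R.filter (fun x => m < x)).Nonempty := by
  have hnon : nonmins m (a :: l) = a :: nonmins m l := by rw [nonmins, if_neg ham]
  have hma : m < a := lt_of_le_of_ne (not_lt.mp ham) (Ne.symm (h.nm a (List.mem_cons_self)))
  have h1 : a ∈ ((nonmins m (a::l)).toFinset).filter (m < ·) := by
    simp only [Finset.mem_filter, List.mem_toFinset, hnon]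
    exact ⟨List.mem_cons_self, hma⟩
  have h2 : 0 < (((nonmins m (a::l)).toFinset).filter (m < ·)).card := Finset.card_pos.mpr ⟨a, h1⟩
  rw [← h.jcard] at h2
  obtain ⟨b, hb⟩ := Finset.card_pos.mp h2
  simp only [Finset.mem_filter, Finset.mem_sdiff] at hb
  exact ⟨b, Finset.mem_filter.mpr ⟨hb.1.1, hb.2⟩⟩



-- ACTUAL NEW MATERIAL

theorem lo_main {σ : List ℕ} : ∀ {m : ℕ} {R : Finset ℕ}, Inv m R σ →
    (fillLo m R σ).toFinset = R ∧ (fillLo m R σ).Nodup ∧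
    cfg m (fillLo m R σ) = cfg m σ ∧ ¬ Has132 (fillLo m R σ) ∧ NoFall m (fillLo m R σ) := by
  induction σ with
  | nil =>
    intro m R h
    have : R = ∅ := Finset.card_eq_zero.mp (by simpa using h.card)
    subst this
    refine ⟨by simp [fillLo], by simp [fillLo], rfl, ?_, ?_⟩
    · rintro ⟨a,b,c,hs,-⟩; simp [fillLo] at hs
    · rintro ⟨a,b,hs,-⟩; simp [fillLo] at hs
  | cons a l ih =>
    intro m R h
    by_cases ham : a < m
    · have inv' := h.min_step ham
      obtain ⟨ht, hnd, hcfg, hh, hnf⟩ := ih inv'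
      have haR : a ∈ R := h.minsub (by simp [mins, if_pos ham])
      have heq : fillLo m R (a :: l) = a :: fillLo a (R.erase a) l := by
        rw [fillLo, if_pos ham]
      set out := fillLo a (R.erase a) l with hout
      have hamem : a ∉ out := by
        intro hx
        have : a ∈ R.erase a := ht ▸ List.mem_toFinset.mpr hx
        exact (Finset.notMem_erase a R) this
      refine ⟨?_, ?_, ?_, ?_, ?_⟩ <;> rw [heq]
      · rw [List.toFinset_cons, ht, Finset.insert_erase haR]
      · exact List.nodup_cons.mpr ⟨hamem, hnd⟩
      · rw [cfg, if_pos ham, cfg, if_pos ham, hcfg]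
      · rw [has132_cons]
        rintro (hbad | ⟨y,z,hs,h1,h2⟩)
        · exact hh hbad
        · exact hnf ⟨y,z,hs,h1,h2⟩
      · rw [noFall_cons]
        constructor
        · intro ⟨x,y,hs,h1,h2⟩
          exact hnf ⟨x,y,hs,ham.trans h1,h2⟩
        · intro y hy h1 h2
          omega
    · have hne := h.fill_nonempty ham
      set b := (R.filter (fun x => m < x)).min' hne with hbdef
      have hbmem : b ∈ R.filter (fun x => m < x) := Finset.min'_mem _ hne
      obtain ⟨hbR, hbm⟩ := Finset.mem_filter.mp hbmem
      have inv' := h.fill_step ham hbmem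
      obtain ⟨ht, hnd, hcfg, hh, hnf⟩ := ih inv'
      have heq : fillLo m R (a :: l) = b :: fillLo m (R.erase b) l := by
        rw [fillLo, if_neg ham, dif_pos hne]
      set out := fillLo m (R.erase b) l with hout
      have hbmem' : b ∉ out := by
        intro hx
        have : b ∈ R.erase b := ht ▸ List.mem_toFinset.mpr hx
        exact (Finset.notMem_erase b R) this
      refine ⟨?_, ?_, ?_, ?_, ?_⟩ <;> rw [heq]
      · rw [List.toFinset_cons, ht, Finset.insert_erase hbR]
      · exact List.nodup_cons.mpr ⟨hbmem', hnd⟩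
      · rw [cfg, if_neg (by omega), cfg, if_neg ham, hcfg]
      · rw [has132_cons]
        rintro (hbad | ⟨y,z,hs,h1,h2⟩)
        · exact hh hbad
        · exact hnf ⟨y,z,hs,hbm.trans h1,h2⟩
      · rw [noFall_cons]
        refine ⟨hnf, fun y hy h1 h2 => ?_⟩
        have hyR : y ∈ R.erase b := ht ▸ List.mem_toFinset.mpr hy
        have : b ≤ y := Finset.min'_le _ y (Finset.mem_filter.mpr ⟨Finset.mem_of_mem_erase hyR, h1⟩)
        omega

theorem hi_main {σ : List ℕ} : ∀ {m : ℕ} {R : Finset ℕ}, Inv m R σ →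
    (fillHi m R σ).toFinset = R ∧ (fillHi m R σ).Nodup ∧
    cfg m (fillHi m R σ) = cfg m σ ∧ ¬ Has123 (fillHi m R σ) ∧ NoRise m (fillHi m R σ) := by
  induction σ with
  | nil =>
    intro m R h
    have : R = ∅ := Finset.card_eq_zero.mp (by simpa using h.card)
    subst this
    refine ⟨by simp [fillHi], by simp [fillHi], rfl, ?_, ?_⟩
    · rintro ⟨a,b,c,hs,-⟩; simp [fillHi] at hs
    · rintro ⟨a,b,hs,-⟩; simp [fillHi] at hs
  | cons a l ih =>
    intro m R h
    by_cases ham : a < m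
    · have inv' := h.min_step ham
      obtain ⟨ht, hnd, hcfg, hh, hnr⟩ := ih inv'
      have haR : a ∈ R := h.minsub (by simp [mins, if_pos ham])
      have heq : fillHi m R (a :: l) = a :: fillHi a (R.erase a) l := by
        rw [fillHi, if_pos ham]
      set out := fillHi a (R.erase a) l with hout
      have hamem : a ∉ out := by
        intro hx
        have : a ∈ R.erase a := ht ▸ List.mem_toFinset.mpr hx
        exact (Finset.notMem_erase a R) this
      refine ⟨?_, ?_, ?_, ?_, ?_⟩ <;> rw [heq]
      · rw [List.toFinset_cons, ht, Finset.insert_erase haR]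
      · exact List.nodup_cons.mpr ⟨hamem, hnd⟩
      · rw [cfg, if_pos ham, cfg, if_pos ham, hcfg]
      · rw [has123_cons]
        rintro (hbad | ⟨y,z,hs,h1,h2⟩)
        · exact hh hbad
        · exact hnr ⟨y,z,hs,h1,h2⟩
      · rw [noRise_cons]
        constructor
        · intro ⟨x,y,hs,h1,h2⟩
          exact hnr ⟨x,y,hs,ham.trans h1,h2⟩
        · intro y hy h1 h2
          omega
    · have hne := h.fill_nonempty ham
      set b := (R.filter (fun x => m < x)).max' hne with hbdef
      have hbmem : b ∈ R.filter (fun x => m < x) := Finset.max'_mem _ hne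
      obtain ⟨hbR, hbm⟩ := Finset.mem_filter.mp hbmem
      have inv' := h.fill_step ham hbmem
      obtain ⟨ht, hnd, hcfg, hh, hnr⟩ := ih inv'
      have heq : fillHi m R (a :: l) = b :: fillHi m (R.erase b) l := by
        rw [fillHi, if_neg ham, dif_pos hne]
      set out := fillHi m (R.erase b) l with hout
      have hbmem' : b ∉ out := by
        intro hx
        have : b ∈ R.erase b := ht ▸ List.mem_toFinset.mpr hx
        exact (Finset.notMem_erase b R) this
      refine ⟨?_, ?_, ?_, ?_, ?_⟩ <;> rw [heq]
      · rw [List.toFinset_cons, ht, Finset.insert_erase hbR]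
      · exact List.nodup_cons.mpr ⟨hbmem', hnd⟩
      · rw [cfg, if_neg (by omega), cfg, if_neg ham, hcfg]
      · rw [has123_cons]
        rintro (hbad | ⟨y,z,hs,h1,h2⟩)
        · exact hh hbad
        · exact hnr ⟨y,z,hs,hbm.trans h1,h2⟩
      · rw [noRise_cons]
        refine ⟨hnr, fun y hy h1 h2 => ?_⟩
        have hyR : y ∈ R.erase b := ht ▸ List.mem_toFinset.mpr hy
        have : y ≤ b := Finset.le_max' _ y (Finset.mem_filter.mpr ⟨Finset.mem_of_mem_erase hyR, h1.trans h2⟩)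
        omega

theorem cons_toFinset_inj {a : ℕ} {l l₂ : List ℕ} (hal : a ∉ l) (hal₂ : a ∉ l₂)
    (h : (a :: l).toFinset = (a :: l₂).toFinset) : l.toFinset = l₂.toFinset := by
  ext x
  simp only [List.mem_toFinset]
  have hx := Finset.ext_iff.mp h x
  simp only [List.toFinset_cons, Finset.mem_insert, List.mem_toFinset] at hx
  constructor
  · intro h1
    rcases hx.mp (Or.inr h1) with rfl | h2
    · exact absurd h1 hal
    · exact h2
  · intro h1
    rcases hx.mpr (Or.inr h1) with rfl | h2
    · exact absurd h1 hal₂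
    · exact h2

theorem uniq132 {σ₁ : List ℕ} : ∀ {σ₂ : List ℕ} {m : ℕ},
    σ₁.Nodup → σ₂.Nodup → (∀ x ∈ σ₁, x ≠ m) → (∀ x ∈ σ₂, x ≠ m) →
    ¬ Has132 σ₁ → NoFall m σ₁ → ¬ Has132 σ₂ → NoFall m σ₂ →
    σ₁.toFinset = σ₂.toFinset → cfg m σ₁ = cfg m σ₂ → σ₁ = σ₂ := by
  induction σ₁ with
  | nil =>
    intro σ₂ m _ _ _ _ _ _ _ _ _ hc
    exact (cfg_eq_nil hc.symm).symm
  | cons a l ih =>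
    intro σ₂ m hnd1 hnd2 hm1 hm2 hh1 hf1 hh2 hf2 hts hc
    cases σ₂ with
    | nil =>
      exfalso
      have hlen := congrArg List.length hc
      rw [cfg_length, cfg_length] at hlen
      simp at hlen
    | cons a₂ l₂ =>
      have hal : a ∉ l := (List.nodup_cons.mp hnd1).1
      have hal₂ : a₂ ∉ l₂ := (List.nodup_cons.mp hnd2).1
      by_cases ham : a < m
      · rw [cfg, if_pos ham, cfg] at hc
        split at hc
        · injection hc with h1 h2
          injection h1 with h1
          subst h1
          have hts' : l.toFinset = l₂.toFinset := cons_toFinset_inj hal hal₂ hts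
          have e : l = l₂ := by
            refine ih (List.nodup_cons.mp hnd1).2 (List.nodup_cons.mp hnd2).2
              (fun x hx hxa => hal (by rwa [hxa] at hx))
              (fun x hx hxa => hal₂ (by rwa [hxa] at hx))
              (fun hb => hh1 (hb.mono (List.sublist_cons_self a l))) ?_
              (fun hb => hh2 (hb.mono (List.sublist_cons_self a l₂))) ?_ hts' h2
            · rintro ⟨x,y,hs,hx1,hx2⟩
              exact hh1 ⟨a,x,y, hs.cons₂ a, hx1, hx2⟩
            · rintro ⟨x,y,hs,hx1,hx2⟩
              exact hh2 ⟨a,x,y, hs.cons₂ a, hx1, hx2⟩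
          rw [e]
        · exact absurd hc (by simp)
      · rw [cfg, if_neg ham, cfg] at hc
        split at hc
        · exact absurd hc (by simp)
        · rename_i ham₂
          injection hc with h1 h2
          have hma : m < a := lt_of_le_of_ne (not_lt.mp ham) (Ne.symm (hm1 a (List.mem_cons_self)))
          have hma₂ : m < a₂ := lt_of_le_of_ne (not_lt.mp ham₂) (Ne.symm (hm2 a₂ (List.mem_cons_self)))
          have key1 : ∀ x ∈ (a :: l), m < x → a ≤ x := by
            intro x hx hmx
            rcases List.mem_cons.mp hx with rfl | hx
            · exact le_refl x
            · by_contra hlt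
              exact hf1 ⟨a, x, pair_cons.mpr (Or.inr ⟨rfl, hx⟩), hmx, by omega⟩
          have key2 : ∀ x ∈ (a₂ :: l₂), m < x → a₂ ≤ x := by
            intro x hx hmx
            rcases List.mem_cons.mp hx with rfl | hx
            · exact le_refl x
            · by_contra hlt
              exact hf2 ⟨a₂, x, pair_cons.mpr (Or.inr ⟨rfl, hx⟩), hmx, by omega⟩
          have ha2mem : a₂ ∈ (a :: l) := by
            have : a₂ ∈ (a :: l).toFinset := hts ▸ (by simp)
            exact List.mem_toFinset.mp this
          have hamem : a ∈ (a₂ :: l₂) := by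
            have : a ∈ (a₂ :: l₂).toFinset := hts ▸ (by simp)
            exact List.mem_toFinset.mp this
          have haa : a = a₂ := Nat.le_antisymm (key1 a₂ ha2mem hma₂) (key2 a hamem hma)
          subst haa
          have hts' : l.toFinset = l₂.toFinset := cons_toFinset_inj hal hal₂ hts
          have e : l = l₂ := by
            refine ih (List.nodup_cons.mp hnd1).2 (List.nodup_cons.mp hnd2).2
              (fun x hx => hm1 x (List.mem_cons_of_mem a hx))
              (fun x hx => hm2 x (List.mem_cons_of_mem a hx))
              (fun hb => hh1 (hb.mono (List.sublist_cons_self a l)))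
              (hf1.mono (List.sublist_cons_self a l))
              (fun hb => hh2 (hb.mono (List.sublist_cons_self a l₂)))
              (hf2.mono (List.sublist_cons_self a l₂)) hts' h2
          rw [e]

theorem uniq123 {σ₁ : List ℕ} : ∀ {σ₂ : List ℕ} {m : ℕ},
    σ₁.Nodup → σ₂.Nodup → (∀ x ∈ σ₁, x ≠ m) → (∀ x ∈ σ₂, x ≠ m) →
    ¬ Has123 σ₁ → NoRise m σ₁ → ¬ Has123 σ₂ → NoRise m σ₂ →
    σ₁.toFinset = σ₂.toFinset → cfg m σ₁ = cfg m σ₂ → σ₁ = σ₂ := by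
  induction σ₁ with
  | nil =>
    intro σ₂ m _ _ _ _ _ _ _ _ _ hc
    exact (cfg_eq_nil hc.symm).symm
  | cons a l ih =>
    intro σ₂ m hnd1 hnd2 hm1 hm2 hh1 hf1 hh2 hf2 hts hc
    cases σ₂ with
    | nil =>
      exfalso
      have hlen := congrArg List.length hc
      rw [cfg_length, cfg_length] at hlen
      simp at hlen
    | cons a₂ l₂ =>
      have hal : a ∉ l := (List.nodup_cons.mp hnd1).1
      have hal₂ : a₂ ∉ l₂ := (List.nodup_cons.mp hnd2).1
      by_cases ham : a < m
      · rw [cfg, if_pos ham, cfg] at hc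
        split at hc
        · injection hc with h1 h2
          injection h1 with h1
          subst h1
          have hts' : l.toFinset = l₂.toFinset := cons_toFinset_inj hal hal₂ hts
          have e : l = l₂ := by
            refine ih (List.nodup_cons.mp hnd1).2 (List.nodup_cons.mp hnd2).2
              (fun x hx hxa => hal (by rwa [hxa] at hx))
              (fun x hx hxa => hal₂ (by rwa [hxa] at hx))
              (fun hb => hh1 (hb.mono (List.sublist_cons_self a l))) ?_
              (fun hb => hh2 (hb.mono (List.sublist_cons_self a l₂))) ?_ hts' h2
            · rintro ⟨x,y,hs,hx1,hx2⟩
              exact hh1 ⟨a,x,y, hs.cons₂ a, hx1, hx2⟩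
            · rintro ⟨x,y,hs,hx1,hx2⟩
              exact hh2 ⟨a,x,y, hs.cons₂ a, hx1, hx2⟩
          rw [e]
        · exact absurd hc (by simp)
      · rw [cfg, if_neg ham, cfg] at hc
        split at hc
        · exact absurd hc (by simp)
        · rename_i ham₂
          injection hc with h1 h2
          have hma : m < a := lt_of_le_of_ne (not_lt.mp ham) (Ne.symm (hm1 a (List.mem_cons_self)))
          have hma₂ : m < a₂ := lt_of_le_of_ne (not_lt.mp ham₂) (Ne.symm (hm2 a₂ (List.mem_cons_self)))
          have key1 : ∀ x ∈ (a :: l), m < x → x ≤ a := by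
            intro x hx hmx
            rcases List.mem_cons.mp hx with rfl | hx
            · exact le_refl x
            · by_contra hlt
              exact hf1 ⟨a, x, pair_cons.mpr (Or.inr ⟨rfl, hx⟩), hma, by omega⟩
          have key2 : ∀ x ∈ (a₂ :: l₂), m < x → x ≤ a₂ := by
            intro x hx hmx
            rcases List.mem_cons.mp hx with rfl | hx
            · exact le_refl x
            · by_contra hlt
              exact hf2 ⟨a₂, x, pair_cons.mpr (Or.inr ⟨rfl, hx⟩), hma₂, by omega⟩
          have ha2mem : a₂ ∈ (a :: l) := by
            have : a₂ ∈ (a :: l).toFinset := hts ▸ (by simp)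
            exact List.mem_toFinset.mp this
          have hamem : a ∈ (a₂ :: l₂) := by
            have : a ∈ (a₂ :: l₂).toFinset := hts ▸ (by simp)
            exact List.mem_toFinset.mp this
          have haa : a = a₂ := Nat.le_antisymm (key2 a hamem hma) (key1 a₂ ha2mem hma₂)
          subst haa
          have hts' : l.toFinset = l₂.toFinset := cons_toFinset_inj hal hal₂ hts
          have e : l = l₂ := by
            refine ih (List.nodup_cons.mp hnd1).2 (List.nodup_cons.mp hnd2).2
              (fun x hx => hm1 x (List.mem_cons_of_mem a hx))
              (fun x hx => hm2 x (List.mem_cons_of_mem a hx))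
              (fun hb => hh1 (hb.mono (List.sublist_cons_self a l)))
              (hf1.mono (List.sublist_cons_self a l))
              (fun hb => hh2 (hb.mono (List.sublist_cons_self a l₂)))
              (hf2.mono (List.sublist_cons_self a l₂)) hts' h2
          rw [e]



-- NEW MATERIAL

theorem noRise_of_bounded {n : ℕ} {l : List ℕ} (h : ∀ x ∈ l, x < n) : NoRise n l := by
  rintro ⟨x, y, hs, h1, h2⟩
  exact absurd (h x (hs.subset (by simp))) (by omega)

theorem noFall_of_bounded {n : ℕ} {l : List ℕ} (h : ∀ x ∈ l, x < n) : NoFall n l := by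
  rintro ⟨x, y, hs, h1, h2⟩
  exact absurd (h y (hs.subset (by simp))) (by omega)

theorem sdiff_mins {m : ℕ} {l : List ℕ} (hnd : l.Nodup) :
    l.toFinset \ (mins m l).toFinset = (nonmins m l).toFinset := by
  have hperm := mins_nonmins_perm m l
  have hnd2 : (mins m l ++ nonmins m l).Nodup := (hperm.nodup_iff).mpr hnd
  obtain ⟨-, -, hdisj⟩ := List.nodup_append'.mp hnd2
  have hts : l.toFinset = (mins m l).toFinset ∪ (nonmins m l).toFinset := by
    rw [← List.toFinset_append]
    exact (List.toFinset_eq_of_perm _ _ hperm).symm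
  ext x
  simp only [Finset.mem_sdiff, hts, Finset.mem_union, List.mem_toFinset] at *
  constructor
  · rintro ⟨h1 | h1, h2⟩
    · exact absurd h1 h2
    · exact h1
  · intro h1
    exact ⟨Or.inr h1, fun h2 => hdisj h2 h1⟩

theorem Inv.init {n : ℕ} {l : List ℕ} (hnd : l.Nodup) (hlt : ∀ x ∈ l, x < n) :
    Inv n l.toFinset l := by
  refine ⟨hnd, fun x hx => (hlt x hx).ne, ?_, ?_, ?_, ?_, ?_⟩
  · simp only [List.mem_toFinset]
    intro h
    exact absurd (hlt n h) (lt_irrefl n)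
  · intro x hx
    simp only [List.mem_toFinset] at hx ⊢
    exact (mins_sublist n l).subset hx
  · exact List.toFinset_card_of_nodup hnd
  · rw [sdiff_mins hnd]
  · rw [sdiff_mins hnd]

noncomputable def AvSet (H : List ℕ → Prop) (n : ℕ) : Finset (List ℕ) :=
  @Finset.filter _ (fun l => ¬ H l) (fun l => Classical.dec _) ((List.range n).permutations.toFinset)

theorem mem_AvSet {H : List ℕ → Prop} {n : ℕ} {l : List ℕ} :
    l ∈ AvSet H n ↔ l ~ List.range n ∧ ¬ H l := by
  rw [AvSet, @Finset.mem_filter _ _ (fun l => Classical.dec _), List.mem_toFinset,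
    List.mem_permutations]

theorem range_facts {n : ℕ} {l : List ℕ} (h : l ~ List.range n) :
    l.Nodup ∧ (∀ x ∈ l, x < n) ∧ l.toFinset = (List.range n).toFinset := by
  refine ⟨h.nodup_iff.mpr (List.nodup_range), fun x hx => ?_, List.toFinset_eq_of_perm _ _ h⟩
  exact List.mem_range.mp (h.subset hx)

theorem card_AvSet_123_eq_132 (n : ℕ) : (AvSet Has123 n).card = (AvSet Has132 n).card := by
  apply Finset.card_nbij' (fun σ => fillLo n σ.toFinset σ) (fun τ => fillHi n τ.toFinset τ)
  · intro σ hσ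
    obtain ⟨hperm, hH⟩ := mem_AvSet.mp hσ
    obtain ⟨hnd, hlt, hts⟩ := range_facts hperm
    obtain ⟨ht, hnd2, hcfg, hh, hnf⟩ := lo_main (Inv.init hnd hlt)
    refine mem_AvSet.mpr ⟨?_, hh⟩
    exact List.perm_of_nodup_nodup_toFinset_eq hnd2 (List.nodup_range) (by rw [ht, hts])
  · intro τ hτ
    obtain ⟨hperm, hH⟩ := mem_AvSet.mp hτ
    obtain ⟨hnd, hlt, hts⟩ := range_facts hperm
    obtain ⟨ht, hnd2, hcfg, hh, hnr⟩ := hi_main (Inv.init hnd hlt)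
    refine mem_AvSet.mpr ⟨?_, hh⟩
    exact List.perm_of_nodup_nodup_toFinset_eq hnd2 (List.nodup_range) (by rw [ht, hts])
  · intro σ hσ
    obtain ⟨hperm, hH⟩ := mem_AvSet.mp hσ
    obtain ⟨hnd, hlt, hts⟩ := range_facts hperm
    obtain ⟨ht, hnd2, hcfg, hh, hnf⟩ := lo_main (Inv.init hnd hlt)
    set out := fillLo n σ.toFinset σ with hout
    have hlt2 : ∀ x ∈ out, x < n := by
      intro x hx
      have : x ∈ σ.toFinset := ht ▸ List.mem_toFinset.mpr hx
      exact hlt x (List.mem_toFinset.mp this)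
    dsimp only
    rw [← hout, ht]
    obtain ⟨ht3, hnd3, hcfg3, hh3, hnr3⟩ := hi_main (R := σ.toFinset) (σ := out)
      (ht ▸ Inv.init hnd2 hlt2)
    refine uniq123 hnd3 hnd ?_ ?_ hh3 hnr3 hH (noRise_of_bounded hlt) (by rw [ht3]) ?_
    · intro x hx
      have : x ∈ σ.toFinset := ht3 ▸ List.mem_toFinset.mpr hx
      exact (hlt x (List.mem_toFinset.mp this)).ne
    · intro x hx
      exact (hlt x hx).ne
    · rw [hcfg3, hcfg]
  · intro τ hτ
    obtain ⟨hperm, hH⟩ := mem_AvSet.mp hτ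
    obtain ⟨hnd, hlt, hts⟩ := range_facts hperm
    obtain ⟨ht, hnd2, hcfg, hh, hnr⟩ := hi_main (Inv.init hnd hlt)
    set out := fillHi n τ.toFinset τ with hout
    have hlt2 : ∀ x ∈ out, x < n := by
      intro x hx
      have : x ∈ τ.toFinset := ht ▸ List.mem_toFinset.mpr hx
      exact hlt x (List.mem_toFinset.mp this)
    dsimp only
    rw [← hout, ht]
    obtain ⟨ht3, hnd3, hcfg3, hh3, hnf3⟩ := lo_main (R := τ.toFinset) (σ := out)
      (ht ▸ Inv.init hnd2 hlt2)
    refine uniq132 hnd3 hnd ?_ ?_ hh3 hnf3 hH (noFall_of_bounded hlt) (by rw [ht3]) ?_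
    · intro x hx
      have : x ∈ τ.toFinset := ht3 ▸ List.mem_toFinset.mpr hx
      exact (hlt x (List.mem_toFinset.mp this)).ne
    · intro x hx
      exact (hlt x hx).ne
    · rw [hcfg3, hcfg]


-- NEW MATERIAL

theorem list_toFinset_range (m : ℕ) : (List.range m).toFinset = Finset.range m := by
  ext x; simp

theorem shift132 {u : List ℕ} {m : ℕ} : Has132 (u.map (· + m)) ↔ Has132 u := by
  constructor
  · rintro ⟨a,b,c,hs,h1,h2⟩
    rw [List.sublist_map_iff] at hs
    obtain ⟨l', hl', heq⟩ := hs
    match l', heq with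
    | [x,y,z], heq =>
      simp only [List.map_cons, List.map_nil, List.cons.injEq, and_true] at heq
      obtain ⟨ha, hb, hc⟩ := heq
      exact ⟨x, y, z, hl', by omega, by omega⟩
  · rintro ⟨a,b,c,hs,h1,h2⟩
    refine ⟨a+m, b+m, c+m, ?_, by omega, by omega⟩
    have := hs.map (· + m)
    simpa using this
theorem split132 {u v : List ℕ} {c : ℕ} (hu : ∀ x ∈ u, x < c) (hv : ∀ y ∈ v, y < c)
    (h : Has132 (u ++ c :: v)) :
    Has132 u ∨ Has132 v ∨ ∃ x ∈ u, ∃ y ∈ v, x < y := by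
  obtain ⟨a,b,c',hs,h1,h2⟩ := h
  rw [List.sublist_append_iff] at hs
  obtain ⟨s, t, heq, hsu, htv⟩ := hs
  rcases s with _|⟨x,s⟩
  · simp only [List.nil_append] at heq
    subst heq
    rcases triple_cons.mp htv with h | ⟨rfl, hpair⟩
    · exact Or.inr (Or.inl ⟨a,b,c',h,h1,h2⟩)
    · have hc'v : c' ∈ v := hpair.subset (by simp)
      have := hv c' hc'v
      omega
  rcases s with _|⟨y,s⟩
  · simp only [List.cons_append, List.nil_append] at heq
    injection heq with e1 e2
    subst e1
    subst e2
    have hau : a ∈ u := hsu.subset (by simp)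
    rcases pair_cons.mp htv with h | ⟨rfl, hc'⟩
    · exact Or.inr (Or.inr ⟨a, hau, c', h.subset (by simp), h1⟩)
    · exact Or.inr (Or.inr ⟨a, hau, c', hc', h1⟩)
  rcases s with _|⟨z,s⟩
  · simp only [List.cons_append, List.nil_append] at heq
    injection heq with e1 e2
    injection e2 with e2 e3
    subst e1
    subst e2
    subst e3
    have hau : a ∈ u := hsu.subset (by simp)
    have hbu : b ∈ u := hsu.subset (by simp)
    have hc' : c' ∈ c :: v := (List.singleton_sublist.mp htv)
    rcases List.mem_cons.mp hc' with rfl | hc'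
    · have := hu b hbu
      omega
    · exact Or.inr (Or.inr ⟨a, hau, c', hc', h1⟩)
  rcases s with _|⟨w,s⟩
  · simp only [List.cons_append, List.nil_append] at heq
    injection heq with e1 e2
    injection e2 with e2 e3
    injection e3 with e3 e4
    subst e1
    subst e2
    subst e3
    have ht : t = [] := e4.symm
    subst ht
    exact Or.inl ⟨a,b,c',hsu,h1,h2⟩
  · exfalso
    simp only [List.cons_append] at heq
    injection heq with e1 e2
    injection e2 with e2 e3
    injection e3 with e3 e4
    exact absurd e4 (by simp)

theorem split_eq {n : ℕ} {l : List ℕ} (h : n ∈ l) :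
    l.takeWhile (· != n) ++ n :: (l.dropWhile (· != n)).tail = l := by
  induction l with
  | nil => simp at h
  | cons a l ih =>
    by_cases ha : a = n
    · subst ha
      rw [List.takeWhile_cons, List.dropWhile_cons]
      simp
    · rw [List.takeWhile_cons, List.dropWhile_cons]
      have : (a != n) = true := by simp [ha]
      rw [this]
      simp only [if_true]
      have hn : n ∈ l := by
        rcases List.mem_cons.mp h with h' | h'
        · exact absurd h'.symm ha
        · exact h'
      simp [ih hn]

theorem takeWhile_of_append {n : ℕ} {U v : List ℕ} (hU : n ∉ U) :
    (U ++ n :: v).takeWhile (· != n) = U ∧ (U ++ n :: v).dropWhile (· != n) = n :: v := by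
  induction U with
  | nil => simp
  | cons a U ih =>
    have ha : a ≠ n := fun h => hU (h ▸ List.mem_cons_self (a := a) (l := U))
    have ihr := ih (fun h => hU (List.mem_cons_of_mem a h))
    rw [List.cons_append, List.takeWhile_cons, List.dropWhile_cons]
    have : (a != n) = true := by simp [ha]
    rw [this]
    simp only [if_true]
    exact ⟨by rw [ihr.1], by rw [ihr.2]⟩

theorem val_split {n : ℕ} {u v : List ℕ} (hperm : (u ++ n :: v) ~ List.range (n+1))
    (hdom : ∀ x ∈ u, ∀ y ∈ v, y < x) :
    (∀ y ∈ v, y < v.length) ∧ (∀ x ∈ u, v.length ≤ x ∧ x < n) ∧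
    u.length + v.length = n := by
  obtain ⟨hnd, hlt, hts⟩ := range_facts hperm
  have hlen : u.length + v.length = n := by
    have := hperm.length_eq
    simp [List.length_range] at this
    omega
  have hndu : u.Nodup := (List.nodup_append'.mp hnd).1
  have hndv : v.Nodup := (List.nodup_cons.mp (List.nodup_append'.mp hnd).2.1).2
  have hnu : n ∉ u := by
    intro hx
    exact (List.disjoint_left.mp (List.nodup_append'.mp hnd).2.2) hx (List.mem_cons_self)
  have hnv : n ∉ v := (List.nodup_cons.mp (List.nodup_append'.mp hnd).2.1).1
  constructor
  · intro y hy
    -- u ∪ {n} ⊆ elements greater than y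
    have hyn : y < n := by
      have := hlt y (by simp [hy])
      have : y ≠ n := fun h => hnv (h ▸ hy)
      omega
    have hsub : insert n u.toFinset ⊆ (Finset.range (n+1)).filter (y < ·) := by
      intro x hx
      rcases Finset.mem_insert.mp hx with rfl | hx
      · exact Finset.mem_filter.mpr ⟨Finset.mem_range.mpr (by omega), hyn⟩
      · refine Finset.mem_filter.mpr ⟨Finset.mem_range.mpr ?_, hdom x (List.mem_toFinset.mp hx) y hy⟩
        have := hlt x (by simp [List.mem_toFinset.mp hx])
        omega
    have hfc : ((Finset.range (n+1)).filter (y < ·)).card = n - y := by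
      have : (Finset.range (n+1)).filter (y < ·) = Finset.Ico (y+1) (n+1) := by
        ext z
        simp only [Finset.mem_filter, Finset.mem_range, Finset.mem_Ico]
        omega
      rw [this, Nat.card_Ico]
      omega
    have hcard : (insert n u.toFinset).card = u.length + 1 := by
      rw [Finset.card_insert_of_notMem (by simp [hnu]), List.toFinset_card_of_nodup hndu]
    have := Finset.card_le_card hsub
    rw [hcard, hfc] at this
    omega
  refine ⟨?_, hlen⟩
  intro x hx
  have hxn : x < n := by
    have := hlt x (by simp [hx])
    have : x ≠ n := fun h => hnu (h ▸ hx)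
    omega
  refine ⟨?_, hxn⟩
  have hsub : v.toFinset ⊆ Finset.range x := by
    intro y hy
    exact Finset.mem_range.mpr (hdom x hx y (List.mem_toFinset.mp hy))
  have := Finset.card_le_card hsub
  rw [List.toFinset_card_of_nodup hndv, Finset.card_range] at this
  exact this

theorem decomp132 {n : ℕ} {l : List ℕ} (hl : l ∈ AvSet Has132 (n+1)) :
    let u := l.takeWhile (· != n)
    let v := (l.dropWhile (· != n)).tail
    let m := v.length
    l = u ++ n :: v ∧ m ≤ n ∧ v ~ List.range m ∧
      u.map (· - m) ~ List.range (n - m) ∧ ¬ Has132 v ∧ ¬ Has132 (u.map (· - m)) ∧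
      (∀ x ∈ u, m ≤ x ∧ x < n) := by
  intro u v m
  obtain ⟨hperm, hH⟩ := mem_AvSet.mp hl
  obtain ⟨hnd, hlt, hts⟩ := range_facts hperm
  have hnl : n ∈ l := hperm.mem_iff.mpr (List.mem_range.mpr (by omega))
  have hsplit : u ++ n :: v = l := split_eq hnl
  have hperm2 : (u ++ n :: v) ~ List.range (n+1) := by rw [hsplit]; exact hperm
  have hdom : ∀ x ∈ u, ∀ y ∈ v, y < x := by
    intro x hxu y hyv
    by_contra hxy
    obtain ⟨hnd2, hlt2, -⟩ := range_facts hperm2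
    have hxny : x ≠ y := by
      intro h
      subst h
      have : ¬ (u ++ n :: v).Nodup := by
        intro hh
        obtain ⟨-, -, hdisj⟩ := List.nodup_append'.mp hh
        exact hdisj hxu (List.mem_cons_of_mem n hyv)
      exact this hnd2
    have hxy' : x < y := by omega
    have hyn : y < n := by
      have h1 := hlt2 y (by simp [hyv])
      have h2 : y ≠ n := by
        intro h
        subst h
        have := (List.nodup_cons.mp (List.nodup_append'.mp hnd2).2.1).1
        exact this hyv
      omega
    apply hH
    rw [← hsplit]
    refine ⟨x, n, y, ?_, hxy', hyn⟩
    exact List.Sublist.append (List.singleton_sublist.mpr hxu)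
      ((List.singleton_sublist.mpr hyv).cons₂ n)
  obtain ⟨hv_lt, hu_bound, hlen⟩ := val_split hperm2 hdom
  obtain ⟨hnd2, hlt2, -⟩ := range_facts hperm2
  have hndu : u.Nodup := (List.nodup_append'.mp hnd2).1
  have hndv : v.Nodup := (List.nodup_cons.mp (List.nodup_append'.mp hnd2).2.1).2
  have hvperm : v ~ List.range m := by
    have hvt : v.toFinset = Finset.range m := by
      apply Finset.eq_of_subset_of_card_le
      · intro y hy
        exact Finset.mem_range.mpr (hv_lt y (List.mem_toFinset.mp hy))
      · rw [Finset.card_range, List.toFinset_card_of_nodup hndv]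
    refine List.perm_of_nodup_nodup_toFinset_eq hndv (List.nodup_range) ?_
    rw [hvt, list_toFinset_range]
  have hut : u.toFinset = Finset.Ico m n := by
    apply Finset.eq_of_subset_of_card_le
    · intro x hx
      exact Finset.mem_Ico.mpr ⟨(hu_bound x (List.mem_toFinset.mp hx)).1,
        (hu_bound x (List.mem_toFinset.mp hx)).2⟩
    · rw [Nat.card_Ico, List.toFinset_card_of_nodup hndu]
      omega
  have humem : ∀ x, x ∈ u ↔ (m ≤ x ∧ x < n) := by
    intro x
    rw [← List.mem_toFinset, hut, Finset.mem_Ico]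
  have hndu' : (u.map (· - m)).Nodup := by
    refine List.Nodup.map_on ?_ hndu
    intro x hx y hy hxy
    have h1 := (humem x).mp hx
    have h2 := (humem y).mp hy
    omega
  have huperm : u.map (· - m) ~ List.range (n - m) := by
    refine List.perm_of_nodup_nodup_toFinset_eq hndu' (List.nodup_range) ?_
    ext z
    simp only [List.mem_toFinset, List.mem_map, list_toFinset_range, Finset.mem_range]
    constructor
    · rintro ⟨x, hx, rfl⟩
      have := (humem x).mp hx
      omega
    · intro hz
      refine ⟨z + m, (humem (z+m)).mpr (by omega), by omega⟩
  have hvH : ¬ Has132 v := by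
    intro h
    apply hH
    rw [← hsplit]
    exact h.mono ((List.sublist_cons_self n v).trans (List.sublist_append_right u (n :: v)))
  have huH' : ¬ Has132 (u.map (· - m)) := by
    intro h
    apply hH
    rw [← hsplit]
    have heq : (u.map (· - m)).map (· + m) = u := by
      rw [List.map_map]
      have : ∀ x ∈ u, ((· + m) ∘ (· - m)) x = x := by
        intro x hx
        have := (humem x).mp hx
        simp only [Function.comp_apply]
        omega
      rw [List.map_congr_left this, List.map_id']
    have := (shift132 (m := m)).mpr h
    rw [heq] at this
    exact this.mono (List.sublist_append_left u (n :: v))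
  exact ⟨hsplit.symm, by omega, hvperm, huperm, hvH, huH',
    fun x hx => (humem x).mp hx⟩

theorem avset132_succ (n : ℕ) :
    (AvSet Has132 (n+1)).card
      = ∑ m ∈ Finset.range (n+1), (AvSet Has132 m).card * (AvSet Has132 (n-m)).card := by
  have hsum : ∑ m ∈ Finset.range (n+1), (AvSet Has132 m).card * (AvSet Has132 (n-m)).card
      = ((Finset.range (n+1)).sigma
          (fun m => AvSet Has132 m ×ˢ AvSet Has132 (n-m))).card := by
    rw [Finset.card_sigma]
    exact Finset.sum_congr rfl (fun m _ => (Finset.card_product _ _).symm)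
  rw [hsum]
  apply Finset.card_nbij'
    (i := fun l => ⟨(l.dropWhile (· != n)).tail.length,
      ((l.dropWhile (· != n)).tail,
       (l.takeWhile (· != n)).map (· - (l.dropWhile (· != n)).tail.length))⟩)
    (j := fun x => x.2.2.map (· + x.1) ++ n :: x.2.1)
  · intro l hl
    obtain ⟨hsplit, hm, hvperm, huperm, hvH, huH, hub⟩ := decomp132 hl
    rw [Finset.mem_coe, Finset.mem_sigma]
    dsimp only
    exact ⟨Finset.mem_range.mpr (by omega),
      Finset.mem_product.mpr ⟨mem_AvSet.mpr ⟨hvperm, hvH⟩, mem_AvSet.mpr ⟨huperm, huH⟩⟩⟩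
  · rintro ⟨m, v, u⟩ hx
    rw [Finset.mem_coe, Finset.mem_sigma] at hx
    dsimp only at hx
    obtain ⟨hmr, hprod⟩ := hx
    obtain ⟨hv, hu⟩ := Finset.mem_product.mp hprod
    obtain ⟨hvperm, hvH⟩ := mem_AvSet.mp hv
    obtain ⟨huperm, huH⟩ := mem_AvSet.mp hu
    have hm : m ≤ n := by
      have := Finset.mem_range.mp hmr
      omega
    obtain ⟨hndv, hvlt, -⟩ := range_facts hvperm
    obtain ⟨hndu, hult, -⟩ := range_facts huperm
    set U := u.map (· + m) with hU
    have hUmem : ∀ z, z ∈ U ↔ (m ≤ z ∧ z < n) := by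
      intro z
      simp only [hU, List.mem_map]
      constructor
      · rintro ⟨x, hx, rfl⟩
        have := hult x hx
        omega
      · intro hz
        refine ⟨z - m, ?_, by omega⟩
        rw [huperm.mem_iff, List.mem_range]
        omega
    have hndU : U.Nodup := List.Nodup.map (fun x y h => by omega) hndu
    have hnodup : (U ++ n :: v).Nodup := by
      rw [List.nodup_append']
      refine ⟨hndU, List.nodup_cons.mpr ⟨fun h => by have := hvlt n h; omega, hndv⟩, ?_⟩
      intro z hzU hzv
      rcases List.mem_cons.mp hzv with rfl | hzv
      · have := (hUmem z).mp hzU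
        omega
      · have h1 := (hUmem z).mp hzU
        have h2 := hvlt z hzv
        omega
    have hperm : (U ++ n :: v) ~ List.range (n+1) := by
      refine List.perm_of_nodup_nodup_toFinset_eq hnodup (List.nodup_range) ?_
      ext z
      simp only [List.toFinset_append, List.toFinset_cons, Finset.mem_union,
        Finset.mem_insert, List.mem_toFinset, list_toFinset_range, Finset.mem_range]
      constructor
      · rintro (hz | rfl | hz)
        · have := (hUmem z).mp hz
          omega
        · omega
        · have := hvlt z hz
          omega
      · intro hz
        by_cases h1 : z = n
        · exact Or.inr (Or.inl h1)
        · by_cases h2 : z < m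
          · exact Or.inr (Or.inr (hvperm.mem_iff.mpr (List.mem_range.mpr h2)))
          · exact Or.inl ((hUmem z).mpr (by omega))
    refine mem_AvSet.mpr ⟨hperm, ?_⟩
    intro h
    rcases split132 (fun x hx => ((hUmem x).mp hx).2) (fun y hy => by
        have := hvlt y hy; omega) h with hbad | hbad | ⟨x, hxU, y, hyv, hxy⟩
    · rw [hU, shift132] at hbad
      exact huH hbad
    · exact hvH hbad
    · have h1 := (hUmem x).mp hxU
      have h2 := hvlt y hyv
      omega
  · intro l hl
    obtain ⟨hsplit, hm, hvperm, huperm, hvH, huH, hub⟩ := decomp132 hl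
    set u := l.takeWhile (· != n) with hu
    set v := (l.dropWhile (· != n)).tail with hv
    set m := v.length with hmdef
    dsimp only
    have heq : (u.map (· - m)).map (· + m) = u := by
      rw [List.map_map]
      have : ∀ x ∈ u, ((· + m) ∘ (· - m)) x = x := by
        intro x hx
        have := hub x hx
        simp only [Function.comp_apply]
        omega
      rw [List.map_congr_left this, List.map_id']
    rw [heq]
    exact hsplit.symm
  · rintro ⟨m, v, u⟩ hx
    rw [Finset.mem_coe, Finset.mem_sigma] at hx
    dsimp only at hx
    obtain ⟨hmr, hprod⟩ := hx
    obtain ⟨hvmem, humem⟩ := Finset.mem_product.mp hprod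
    obtain ⟨hvperm, hvH⟩ := mem_AvSet.mp hvmem
    obtain ⟨huperm, huH⟩ := mem_AvSet.mp humem
    obtain ⟨hndu, hult, -⟩ := range_facts huperm
    have hnU : n ∉ u.map (· + m) := by
      intro h
      obtain ⟨x, hxu, hxe⟩ := List.mem_map.mp h
      have := hult x hxu
      have := Finset.mem_range.mp hmr
      omega
    obtain ⟨ht, hd⟩ := takeWhile_of_append (v := v) hnU
    dsimp only
    rw [ht, hd]
    simp only [List.tail_cons]
    have hvlen : v.length = m := by
      rw [hvperm.length_eq, List.length_range]
    rw [hvlen]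
    have heq2 : (u.map (· + m)).map (· - m) = u := by
      rw [List.map_map]
      have : ∀ x ∈ u, ((· - m) ∘ (· + m)) x = x := by
        intro x hx
        simp only [Function.comp_apply]
        omega
      rw [List.map_congr_left this, List.map_id']
    rw [heq2]

theorem avset132_card (n : ℕ) : (AvSet Has132 n).card = catalan n := by
  induction n using Nat.strong_induction_on with
  | _ n ih =>
    match n with
    | 0 =>
      have : AvSet Has132 0 = {[]} := by
        ext l
        rw [mem_AvSet]
        simp only [List.range_zero, Finset.mem_singleton]
        constructor
        · rintro ⟨h, -⟩
          exact List.Perm.eq_nil h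
        · rintro rfl
          refine ⟨List.Perm.refl _, ?_⟩
          rintro ⟨a,b,c,hs,-⟩
          simp at hs
      rw [this, catalan_zero, Finset.card_singleton]
    | (k+1) =>
      rw [avset132_succ k, catalan_succ k, ← Finset.sum_range (fun i => catalan i * catalan (k - i))]
      refine Finset.sum_congr rfl ?_
      intro m hm
      have hmk := Finset.mem_range.mp hm
      rw [ih m (by omega), ih (k - m) (by omega)]



theorem triple_rev {a b c : ℕ} {l : List ℕ} : [a,b,c] <+ l.reverse ↔ [c,b,a] <+ l := by
  constructor
  · intro h
    have := h.reverse
    simpa using this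
  · intro h
    have := h.reverse
    simpa using this

theorem has132_reverse {l : List ℕ} : Has132 l.reverse ↔ Has231 l := by
  constructor
  · rintro ⟨a,b,c,hs,h1,h2⟩
    exact ⟨c,b,a, triple_rev.mp hs, h1, h2⟩
  · rintro ⟨a,b,c,hs,h1,h2⟩
    exact ⟨c,b,a, triple_rev.mpr (by simpa using hs), h1, h2⟩

theorem has123_reverse {l : List ℕ} : Has123 l.reverse ↔ Has321 l := by
  constructor
  · rintro ⟨a,b,c,hs,h1,h2⟩
    exact ⟨c,b,a, triple_rev.mp hs, h1, h2⟩
  · rintro ⟨a,b,c,hs,h1,h2⟩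
    exact ⟨c,b,a, triple_rev.mpr (by simpa using hs), h1, h2⟩

theorem has312_reverse {l : List ℕ} : Has312 l.reverse ↔ Has213 l := by
  constructor
  · rintro ⟨a,b,c,hs,h1,h2⟩
    exact ⟨c,b,a, triple_rev.mp hs, h1, h2⟩
  · rintro ⟨a,b,c,hs,h1,h2⟩
    exact ⟨c,b,a, triple_rev.mpr (by simpa using hs), h1, h2⟩

theorem card_rev (H1 H2 : List ℕ → Prop) (hiff : ∀ l : List ℕ, H1 l.reverse ↔ H2 l) (n : ℕ) :
    (AvSet H2 n).card = (AvSet H1 n).card := by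
  apply Finset.card_nbij' (i := fun l => l.reverse) (j := fun l => l.reverse)
  · intro l hl
    obtain ⟨hp, hH⟩ := mem_AvSet.mp hl
    exact mem_AvSet.mpr ⟨(l.reverse_perm).trans hp, fun h => hH ((hiff l).mp h)⟩
  · intro l hl
    obtain ⟨hp, hH⟩ := mem_AvSet.mp hl
    refine mem_AvSet.mpr ⟨(l.reverse_perm).trans hp, fun h => hH ?_⟩
    have := (hiff l.reverse).mpr h
    rwa [List.reverse_reverse] at this
  · intro l _; exact List.reverse_reverse l
  · intro l _; exact List.reverse_reverse l

theorem compl_map_lemma {n : ℕ} {l : List ℕ} (h : l ~ List.range n) :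
    l.map (fun x => n - 1 - x) ~ List.range n := by
  obtain ⟨hnd, hlt, hts⟩ := range_facts h
  have hnd2 : (l.map (fun x => n - 1 - x)).Nodup := by
    refine List.Nodup.map_on ?_ hnd
    intro x hx y hy hxy
    have := hlt x hx
    have := hlt y hy
    omega
  refine List.perm_of_nodup_nodup_toFinset_eq hnd2 (List.nodup_range) ?_
  ext z
  simp only [List.mem_toFinset, List.mem_map, list_toFinset_range, Finset.mem_range]
  constructor
  · rintro ⟨x, hx, rfl⟩
    have := hlt x hx
    omega
  · intro hz
    refine ⟨n - 1 - z, ?_, by omega⟩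
    have : n - 1 - z ∈ List.range n := List.mem_range.mpr (by omega)
    exact h.mem_iff.mpr this

theorem has132_compl {n : ℕ} {l : List ℕ} (hlt : ∀ x ∈ l, x < n) :
    Has132 (l.map (fun x => n - 1 - x)) ↔ Has312 l := by
  constructor
  · rintro ⟨a,b,c,hs,h1,h2⟩
    rw [List.sublist_map_iff] at hs
    obtain ⟨l', hl', heq⟩ := hs
    match l', heq with
    | [x,y,z], heq =>
      simp only [List.map_cons, List.map_nil, List.cons.injEq, and_true] at heq
      obtain ⟨ha, hb, hc⟩ := heq
      have hx := hlt x (hl'.subset (by simp))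
      have hy := hlt y (hl'.subset (by simp))
      have hz := hlt z (hl'.subset (by simp))
      exact ⟨x, y, z, hl', by omega, by omega⟩
  · rintro ⟨a,b,c,hs,h1,h2⟩
    have hx := hlt a (hs.subset (by simp))
    have hy := hlt b (hs.subset (by simp))
    have hz := hlt c (hs.subset (by simp))
    refine ⟨n-1-a, n-1-b, n-1-c, ?_, by omega, by omega⟩
    have := hs.map (fun x => n - 1 - x)
    simpa using this

theorem has123_compl {n : ℕ} {l : List ℕ} (hlt : ∀ x ∈ l, x < n) :
    Has123 (l.map (fun x => n - 1 - x)) ↔ Has321 l := by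
  constructor
  · rintro ⟨a,b,c,hs,h1,h2⟩
    rw [List.sublist_map_iff] at hs
    obtain ⟨l', hl', heq⟩ := hs
    match l', heq with
    | [x,y,z], heq =>
      simp only [List.map_cons, List.map_nil, List.cons.injEq, and_true] at heq
      obtain ⟨ha, hb, hc⟩ := heq
      have hx := hlt x (hl'.subset (by simp))
      have hy := hlt y (hl'.subset (by simp))
      have hz := hlt z (hl'.subset (by simp))
      exact ⟨x, y, z, hl', by omega, by omega⟩
  · rintro ⟨a,b,c,hs,h1,h2⟩
    have hx := hlt a (hs.subset (by simp))
    have hy := hlt b (hs.subset (by simp))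
    have hz := hlt c (hs.subset (by simp))
    refine ⟨n-1-a, n-1-b, n-1-c, ?_, by omega, by omega⟩
    have := hs.map (fun x => n - 1 - x)
    simpa using this

theorem map_compl_compl {n : ℕ} {l : List ℕ} (hlt : ∀ x ∈ l, x < n) :
    (l.map (fun x => n - 1 - x)).map (fun x => n - 1 - x) = l := by
  rw [List.map_map]
  have : ∀ x ∈ l, ((fun x => n - 1 - x) ∘ (fun x => n - 1 - x)) x = x := by
    intro x hx
    have := hlt x hx
    simp only [Function.comp_apply]
    omega
  rw [List.map_congr_left this, List.map_id']

theorem card_compl (H1 H2 : List ℕ → Prop)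
    (hiff : ∀ (n : ℕ) (l : List ℕ), (∀ x ∈ l, x < n) → (H1 (l.map (fun x => n - 1 - x)) ↔ H2 l))
    (n : ℕ) : (AvSet H2 n).card = (AvSet H1 n).card := by
  apply Finset.card_nbij' (i := fun l => l.map (fun x => n - 1 - x))
    (j := fun l => l.map (fun x => n - 1 - x))
  · intro l hl
    obtain ⟨hp, hH⟩ := mem_AvSet.mp hl
    obtain ⟨-, hlt, -⟩ := range_facts hp
    exact mem_AvSet.mpr ⟨compl_map_lemma hp, fun h => hH ((hiff n l hlt).mp h)⟩
  · intro l hl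
    obtain ⟨hp, hH⟩ := mem_AvSet.mp hl
    obtain ⟨-, hlt, -⟩ := range_facts hp
    refine mem_AvSet.mpr ⟨compl_map_lemma hp, fun h => hH ?_⟩
    have hlt2 : ∀ x ∈ l.map (fun x => n - 1 - x), x < n := by
      intro x hx
      obtain ⟨-, h2, -⟩ := range_facts (compl_map_lemma hp)
      exact h2 x hx
    have := (hiff n (l.map (fun x => n - 1 - x)) hlt2).mpr h
    rwa [map_compl_compl hlt] at this
  · intro l hl
    obtain ⟨hp, -⟩ := mem_AvSet.mp hl
    obtain ⟨-, hlt, -⟩ := range_facts hp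
    exact map_compl_compl hlt
  · intro l hl
    obtain ⟨hp, -⟩ := mem_AvSet.mp hl
    obtain ⟨-, hlt, -⟩ := range_facts hp
    exact map_compl_compl hlt



def permList {n : ℕ} (p : Equiv.Perm (Fin n)) : List ℕ := List.ofFn (fun i => (p i : ℕ))

theorem permList_perm {n : ℕ} (p : Equiv.Perm (Fin n)) : permList p ~ List.range n := by
  have hnd : (permList p).Nodup := by
    rw [permList, List.nodup_ofFn]
    intro i j hij
    exact p.injective (Fin.val_injective hij)
  refine List.perm_of_nodup_nodup_toFinset_eq hnd (List.nodup_range) ?_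
  ext z
  simp only [permList, List.mem_toFinset, List.mem_ofFn, list_toFinset_range, Finset.mem_range]
  constructor
  · rintro ⟨i, rfl⟩
    exact (p i).isLt
  · intro hz
    exact ⟨p.symm ⟨z, hz⟩, by simp⟩

theorem permList_length {n : ℕ} (p : Equiv.Perm (Fin n)) : (permList p).length = n := by
  simp [permList]

theorem contains_iff {n : ℕ} (p : Equiv.Perm (Fin n)) (q : Equiv.Perm (Fin 3)) :
    PermContains p q ↔ ∃ a b c : ℕ, [a,b,c] <+ permList p ∧
      (q 0 < q 1 ↔ a < b) ∧ (q 0 < q 2 ↔ a < c) ∧ (q 1 < q 2 ↔ b < c) := by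
  constructor
  · rintro ⟨f, hf⟩
    have hmono := f.strictMono
    have h01 : f 0 < f 1 := hmono (by decide)
    have h12 : f 1 < f 2 := hmono (by decide)
    set c0 : Fin (permList p).length := Fin.cast (permList_length p).symm (f 0) with hc0
    set c1 : Fin (permList p).length := Fin.cast (permList_length p).symm (f 1) with hc1
    set c2 : Fin (permList p).length := Fin.cast (permList_length p).symm (f 2) with hc2
    set is : List (Fin (permList p).length) := [c0, c1, c2] with his
    have hv01 : (c0 : ℕ) < (c1 : ℕ) := by simpa [hc0, hc1] using h01
    have hv12 : (c1 : ℕ) < (c2 : ℕ) := by simpa [hc1, hc2] using h12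
    have hpw : List.Pairwise (fun x1 x2 : Fin (permList p).length => (x1 : ℕ) < (x2 : ℕ)) is := by
      rw [his]
      refine List.Pairwise.cons ?_ (List.Pairwise.cons ?_ (List.pairwise_singleton _ _))
      · intro x hx
        rcases List.mem_cons.mp hx with rfl | hx
        · exact hv01
        · rcases List.mem_singleton.mp hx with rfl
          exact hv01.trans hv12
      · intro x hx
        rcases List.mem_singleton.mp hx with rfl
        exact hv12
    have hsub := List.map_getElem_sublist hpw
    have hget : ∀ i : Fin n, (permList p).get (Fin.cast (permList_length p).symm i) = (p i : ℕ) := by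
      intro i
      simp [permList, List.get_ofFn]
      rfl
    refine ⟨(p (f 0) : ℕ), (p (f 1) : ℕ), (p (f 2) : ℕ), ?_, ?_, ?_, ?_⟩
    · have : is.map (permList p).get = [(p (f 0) : ℕ), (p (f 1) : ℕ), (p (f 2) : ℕ)] := by
        rw [his]
        simp only [List.map_cons, List.map_nil, hc0, hc1, hc2, hget]
      rw [← this]
      exact hsub
    · rw [hf 0 1, Fin.lt_def]
    · rw [hf 0 2, Fin.lt_def]
    · rw [hf 1 2, Fin.lt_def]
  · rintro ⟨a, b, c, hs, h1, h2, h3⟩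
    obtain ⟨is, heq, hpw⟩ := List.sublist_eq_map_getElem hs
    match is, heq, hpw with
    | [i, j, k], heq, hpw =>
      simp only [List.map_cons, List.map_nil, List.cons.injEq, and_true] at heq
      obtain ⟨ha, hb, hc⟩ := heq
      set L : List (Fin (permList p).length) := [i, j, k] with hL
      have hLlen : L.length = 3 := rfl
      set g : Fin 3 → Fin n := fun m => Fin.cast (permList_length p) (L.get (Fin.cast hLlen.symm m)) with hg
      have hgmono : StrictMono g := by
        intro x y hxy
        rw [hg, Fin.lt_def]
        simp only [Fin.coe_cast]
        have := List.pairwise_iff_get.mp hpw (Fin.cast hLlen.symm x) (Fin.cast hLlen.symm y)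
          (by rw [Fin.lt_def]; simpa using hxy)
        exact this
      have hget : ∀ i0 : Fin (permList p).length,
          (p (Fin.cast (permList_length p) i0) : ℕ) = (permList p).get i0 := by
        intro i0
        rw [List.get_eq_getElem]
        simp [permList]
        try rfl
      have hva : (p (g 0) : ℕ) = a := by rw [ha]; exact hget i
      have hvb : (p (g 1) : ℕ) = b := by rw [hb]; exact hget j
      have hvc : (p (g 2) : ℕ) = c := by rw [hc]; exact hget k
      have hndl : (permList p).Nodup := ((permList_perm p).nodup_iff).mpr (List.nodup_range)
      have hnd3 : ([a,b,c] : List ℕ).Nodup := hs.nodup hndl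
      have hab : a ≠ b := by simp at hnd3; tauto
      have hac : a ≠ c := by simp at hnd3; tauto
      have hbc : b ≠ c := by simp at hnd3; tauto
      have hq01 : ((q 0 : Fin 3) : ℕ) ≠ ((q 1 : Fin 3) : ℕ) :=
        fun h => by simpa using q.injective (Fin.val_injective h)
      have hq02 : ((q 0 : Fin 3) : ℕ) ≠ ((q 2 : Fin 3) : ℕ) :=
        fun h => by simpa using q.injective (Fin.val_injective h)
      have hq12 : ((q 1 : Fin 3) : ℕ) ≠ ((q 2 : Fin 3) : ℕ) :=
        fun h => by simpa using q.injective (Fin.val_injective h)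
      rw [Fin.lt_def] at h1 h2 h3
      refine ⟨OrderEmbedding.ofStrictMono g hgmono, ?_⟩
      intro s t
      fin_cases s <;> fin_cases t <;>
        simp only [OrderEmbedding.coe_ofStrictMono, Fin.zero_eta, Fin.mk_one, Fin.reduceFinMk,
          Fin.isValue, Fin.lt_def, hva, hvb, hvc] <;>
        omega

def q123 : Equiv.Perm (Fin 3) := ⟨![0,1,2], ![0,1,2], by decide, by decide⟩
def q132 : Equiv.Perm (Fin 3) := ⟨![0,2,1], ![0,2,1], by decide, by decide⟩
def q213 : Equiv.Perm (Fin 3) := ⟨![1,0,2], ![1,0,2], by decide, by decide⟩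
def q231 : Equiv.Perm (Fin 3) := ⟨![1,2,0], ![2,0,1], by decide, by decide⟩
def q312 : Equiv.Perm (Fin 3) := ⟨![2,0,1], ![1,2,0], by decide, by decide⟩
def q321 : Equiv.Perm (Fin 3) := ⟨![2,1,0], ![2,1,0], by decide, by decide⟩

def Has132' (l : List ℕ) : Prop := ∃ a b c : ℕ, [a,b,c] <+ l ∧ a < c ∧ c < b

theorem nodup3 {n : ℕ} (p : Equiv.Perm (Fin n)) {a b c : ℕ} (hs : [a,b,c] <+ permList p) :
    a ≠ b ∧ a ≠ c ∧ b ≠ c := by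
  have hnd3 : ([a,b,c] : List ℕ).Nodup :=
    hs.nodup (((permList_perm p).nodup_iff).mpr (List.nodup_range))
  simp only [List.nodup_cons, List.mem_cons, List.mem_singleton, List.not_mem_nil] at hnd3
  refine ⟨?_, ?_, ?_⟩ <;> tauto



theorem contains123 {n : ℕ} (p : Equiv.Perm (Fin n)) :
    PermContains p q123 ↔ ∃ a b c : ℕ, [a,b,c] <+ permList p ∧ a < b ∧ b < c := by
  rw [contains_iff]
  have hq1 : q123 0 < q123 1 := by decide
  have hq2 : q123 0 < q123 2 := by decide
  have hq3 : q123 1 < q123 2 := by decide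
  constructor
  · rintro ⟨a,b,c,hs,h1,h2,h3⟩
    exact ⟨a,b,c,hs, h1.mp hq1, h3.mp hq3⟩
  · rintro ⟨a,b,c,hs,h1,h2⟩
    exact ⟨a,b,c,hs, iff_of_true hq1 h1, iff_of_true hq2 (by omega), iff_of_true hq3 h2⟩

theorem contains132 {n : ℕ} (p : Equiv.Perm (Fin n)) :
    PermContains p q132 ↔ ∃ a b c : ℕ, [a,b,c] <+ permList p ∧ a < c ∧ c < b := by
  rw [contains_iff]
  have hq1 : q132 0 < q132 1 := by decide
  have hq2 : q132 0 < q132 2 := by decide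
  have hq3 : ¬ q132 1 < q132 2 := by decide
  constructor
  · rintro ⟨a,b,c,hs,h1,h2,h3⟩
    obtain ⟨hab, hac, hbc⟩ := nodup3 p hs
    have e1 := h1.mp hq1
    have e2 := h2.mp hq2
    have e3 : ¬ b < c := fun h => hq3 (h3.mpr h)
    exact ⟨a,b,c,hs, e2, by omega⟩
  · rintro ⟨a,b,c,hs,h1,h2⟩
    exact ⟨a,b,c,hs, iff_of_true hq1 (by omega), iff_of_true hq2 h1, iff_of_false hq3 (by omega)⟩

theorem contains213 {n : ℕ} (p : Equiv.Perm (Fin n)) :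
    PermContains p q213 ↔ ∃ a b c : ℕ, [a,b,c] <+ permList p ∧ b < a ∧ a < c := by
  rw [contains_iff]
  have hq1 : ¬ q213 0 < q213 1 := by decide
  have hq2 : q213 0 < q213 2 := by decide
  have hq3 : q213 1 < q213 2 := by decide
  constructor
  · rintro ⟨a,b,c,hs,h1,h2,h3⟩
    obtain ⟨hab, hac, hbc⟩ := nodup3 p hs
    have e1 : ¬ a < b := fun h => hq1 (h1.mpr h)
    have e2 := h2.mp hq2
    exact ⟨a,b,c,hs, by omega, e2⟩
  · rintro ⟨a,b,c,hs,h1,h2⟩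
    exact ⟨a,b,c,hs, iff_of_false hq1 (by omega), iff_of_true hq2 h2, iff_of_true hq3 (by omega)⟩

theorem contains231 {n : ℕ} (p : Equiv.Perm (Fin n)) :
    PermContains p q231 ↔ ∃ a b c : ℕ, [a,b,c] <+ permList p ∧ c < a ∧ a < b := by
  rw [contains_iff]
  have hq1 : q231 0 < q231 1 := by decide
  have hq2 : ¬ q231 0 < q231 2 := by decide
  have hq3 : ¬ q231 1 < q231 2 := by decide
  constructor
  · rintro ⟨a,b,c,hs,h1,h2,h3⟩
    obtain ⟨hab, hac, hbc⟩ := nodup3 p hs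
    have e1 := h1.mp hq1
    have e2 : ¬ a < c := fun h => hq2 (h2.mpr h)
    exact ⟨a,b,c,hs, by omega, e1⟩
  · rintro ⟨a,b,c,hs,h1,h2⟩
    exact ⟨a,b,c,hs, iff_of_true hq1 h2, iff_of_false hq2 (by omega), iff_of_false hq3 (by omega)⟩

theorem contains312 {n : ℕ} (p : Equiv.Perm (Fin n)) :
    PermContains p q312 ↔ ∃ a b c : ℕ, [a,b,c] <+ permList p ∧ b < c ∧ c < a := by
  rw [contains_iff]
  have hq1 : ¬ q312 0 < q312 1 := by decide
  have hq2 : ¬ q312 0 < q312 2 := by decide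
  have hq3 : q312 1 < q312 2 := by decide
  constructor
  · rintro ⟨a,b,c,hs,h1,h2,h3⟩
    obtain ⟨hab, hac, hbc⟩ := nodup3 p hs
    have e2 : ¬ a < c := fun h => hq2 (h2.mpr h)
    have e3 := h3.mp hq3
    exact ⟨a,b,c,hs, e3, by omega⟩
  · rintro ⟨a,b,c,hs,h1,h2⟩
    exact ⟨a,b,c,hs, iff_of_false hq1 (by omega), iff_of_false hq2 (by omega), iff_of_true hq3 h1⟩

theorem contains321 {n : ℕ} (p : Equiv.Perm (Fin n)) :
    PermContains p q321 ↔ ∃ a b c : ℕ, [a,b,c] <+ permList p ∧ c < b ∧ b < a := by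
  rw [contains_iff]
  have hq1 : ¬ q321 0 < q321 1 := by decide
  have hq2 : ¬ q321 0 < q321 2 := by decide
  have hq3 : ¬ q321 1 < q321 2 := by decide
  constructor
  · rintro ⟨a,b,c,hs,h1,h2,h3⟩
    obtain ⟨hab, hac, hbc⟩ := nodup3 p hs
    have e1 : ¬ a < b := fun h => hq1 (h1.mpr h)
    have e3 : ¬ b < c := fun h => hq3 (h3.mpr h)
    exact ⟨a,b,c,hs, by omega, by omega⟩
  · rintro ⟨a,b,c,hs,h1,h2⟩
    exact ⟨a,b,c,hs, iff_of_false hq1 (by omega), iff_of_false hq2 (by omega),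
      iff_of_false hq3 (by omega)⟩

theorem S_eq_card {n : ℕ} (q : Equiv.Perm (Fin 3)) (Hq : List ℕ → Prop)
    (hiff : ∀ p : Equiv.Perm (Fin n), PermContains p q ↔ Hq (permList p)) :
    S n q = (AvSet Hq n).card := by
  classical
  rw [S, Nat.card_eq_fintype_card, Fintype.card_subtype]
  apply Finset.card_bij (fun p _ => permList p)
  · intro p hp
    rw [Finset.mem_filter] at hp
    exact mem_AvSet.mpr ⟨permList_perm p, fun h => hp.2 ((hiff p).mpr h)⟩
  · intro p1 h1 p2 h2 heq
    rw [permList, permList] at heq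
    have := List.ofFn_inj.mp heq
    exact Equiv.ext (fun i => Fin.val_injective (congrFun this i))
  · intro l hl
    obtain ⟨hp, hH⟩ := mem_AvSet.mp hl
    obtain ⟨hnd, hlt, -⟩ := range_facts hp
    have hlen : l.length = n := by rw [hp.length_eq, List.length_range]
    have hg : ∀ i0 : Fin n, l.get (Fin.cast hlen.symm i0) < n :=
      fun i0 => hlt _ (l.get_mem _)
    set g : Fin n → Fin n := fun i0 => ⟨l.get (Fin.cast hlen.symm i0), hg i0⟩ with hgdef
    have hginj : Function.Injective g := by
      intro x y hxy
      have hv : l.get (Fin.cast hlen.symm x) = l.get (Fin.cast hlen.symm y) := by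
        have := congrArg Fin.val hxy
        simpa [hgdef] using this
      have := (List.nodup_iff_injective_get.mp hnd) hv
      have := congrArg Fin.val this
      simp only [Fin.coe_cast] at this
      exact Fin.val_injective this
    have hgbij : Function.Bijective g := Finite.injective_iff_bijective.mp hginj
    set p : Equiv.Perm (Fin n) := Equiv.ofBijective g hgbij with hpdef
    have hpl : permList p = l := by
      apply List.ext_get (by simp [permList, hlen])
      intro i0 hi1 hi2
      simp only [permList, List.get_ofFn]
      rfl
    refine ⟨p, ?_, hpl⟩
    rw [Finset.mem_filter]
    refine ⟨Finset.mem_univ p, ?_⟩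
    intro hcon
    rw [hiff p, hpl] at hcon
    exact hH hcon


theorem S_eq_catalan {n : ℕ} (q : Equiv.Perm (Fin 3)) : S n q = catalan n := by
  have h132 : (AvSet Has132 n).card = catalan n := avset132_card n
  have h231 : (AvSet Has231 n).card = catalan n := by
    rw [card_rev Has132 Has231 (fun l => has132_reverse) n, h132]
  have h312 : (AvSet Has312 n).card = catalan n := by
    rw [card_compl Has132 Has312 (fun n l hlt => has132_compl hlt) n, h132]
  have h213 : (AvSet Has213 n).card = catalan n := by
    rw [card_rev Has312 Has213 (fun l => has312_reverse) n, h312]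
  have h123 : (AvSet Has123 n).card = catalan n := by
    rw [card_AvSet_123_eq_132 n, h132]
  have h321 : (AvSet Has321 n).card = catalan n := by
    rw [card_rev Has123 Has321 (fun l => has123_reverse) n, h123]
  have hq6 : q = q123 ∨ q = q132 ∨ q = q213 ∨ q = q231 ∨ q = q312 ∨ q = q321 := by
    revert q; decide
  rcases hq6 with rfl | rfl | rfl | rfl | rfl | rfl
  · rw [S_eq_card q123 Has123 (fun p => contains123 p), h123]
  · rw [S_eq_card q132 Has132 (fun p => contains132 p), h132]
  · rw [S_eq_card q213 Has213 (fun p => contains213 p), h213]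
  · rw [S_eq_card q231 Has231 (fun p => contains231 p), h231]
  · rw [S_eq_card q312 Has312 (fun p => contains312 p), h312]
  · rw [S_eq_card q321 Has321 (fun p => contains321 p), h321]

end PatAux

theorem sn_length_three_eq_catalan (q : Equiv.Perm (Fin 3)) (n : ℕ) (hn : 0 < n) :
    S n q = Nat.choose (2 * n) n / (n + 1) := by
  rw [PatAux.S_eq_catalan q]
  have h1 := succ_mul_catalan_eq_centralBinom n
  have h2 : Nat.centralBinom n = (2*n).choose n := rfl
  rw [← h2, ← h1, Nat.mul_div_cancel_left _ (Nat.succ_pos n)]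
end

section
/- For all positive integers n and all integers k > 2, the number of permutations of length n avoiding the increasing pattern 12...k satisfies S_n(12...k) ≤ (k-1)^{2n}. -/
section Aux

variable {n : ℕ}

/-- `s` is an increasing subsequence (chain in both coordinates) ending at position `i`. -/
def IsChainEnd (p : Equiv.Perm (Fin n)) (i : Fin n) (s : Finset (Fin n)) : Prop :=
  i ∈ s ∧ (∀ a ∈ s, a ≤ i) ∧ ∀ a ∈ s, ∀ b ∈ s, a < b → p a < p b

open scoped Classical in
/-- Length of the longest increasing subsequence of `p` ending at position `i`. -/
noncomputable def FF (p : Equiv.Perm (Fin n)) (i : Fin n) : ℕ :=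
  ((Finset.univ : Finset (Finset (Fin n))).filter fun s => IsChainEnd p i s).sup Finset.card

lemma isChainEnd_singleton (p : Equiv.Perm (Fin n)) (i : Fin n) :
    IsChainEnd p i {i} := by
  refine ⟨Finset.mem_singleton_self i, ?_, ?_⟩
  · intro a ha; rw [Finset.mem_singleton] at ha; exact ha.le
  · intro a ha b hb hab
    rw [Finset.mem_singleton] at ha hb
    subst ha; subst hb
    exact absurd hab (lt_irrefl _)

open scoped Classical in
lemma card_le_FF {p : Equiv.Perm (Fin n)} {i : Fin n} {s : Finset (Fin n)}
    (h : IsChainEnd p i s) : s.card ≤ FF p i := by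
  exact Finset.le_sup (Finset.mem_filter.2 ⟨Finset.mem_univ s, h⟩)

lemma one_le_FF (p : Equiv.Perm (Fin n)) (i : Fin n) : 1 ≤ FF p i := by
  have := card_le_FF (isChainEnd_singleton p i)
  simpa using this

open scoped Classical in
lemma exists_chainEnd_FF (p : Equiv.Perm (Fin n)) (i : Fin n) :
    ∃ s : Finset (Fin n), IsChainEnd p i s ∧ s.card = FF p i := by
  have hne : ((Finset.univ : Finset (Finset (Fin n))).filter
      fun s => IsChainEnd p i s).Nonempty :=
    ⟨{i}, Finset.mem_filter.2 ⟨Finset.mem_univ _, isChainEnd_singleton p i⟩⟩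
  obtain ⟨s, hs, hcard⟩ := Finset.exists_mem_eq_sup _ hne Finset.card
  exact ⟨s, (Finset.mem_filter.1 hs).2, hcard.symm⟩

lemma FF_lt_FF {p : Equiv.Perm (Fin n)} {i j : Fin n} (hij : i < j) (hp : p i < p j) :
    FF p i < FF p j := by
  obtain ⟨s, hs, hcard⟩ := exists_chainEnd_FF p i
  have hjs : j ∉ s := fun h => absurd (hs.2.1 j h) (not_le.2 hij)
  have hchain : IsChainEnd p j (insert j s) := by
    refine ⟨Finset.mem_insert_self j s, ?_, ?_⟩
    · intro a ha
      rcases Finset.mem_insert.1 ha with rfl | ha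
      · exact le_rfl
      · exact (hs.2.1 a ha).trans hij.le
    · intro a ha b hb hab
      rcases Finset.mem_insert.1 hb with hbeq | hb'
      · rcases Finset.mem_insert.1 ha with haeq | ha'
        · subst haeq; subst hbeq; exact absurd hab (lt_irrefl _)
        · subst hbeq
          rcases eq_or_lt_of_le (hs.2.1 a ha') with haeq | h
          · rw [haeq]; exact hp
          · exact (hs.2.2 a ha' i hs.1 h).trans hp
      · rcases Finset.mem_insert.1 ha with haeq | ha'
        · subst haeq
          exact absurd (hab.trans_le ((hs.2.1 b hb').trans hij.le)) (lt_irrefl _)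
        · exact hs.2.2 a ha' b hb' hab
  have := card_le_FF hchain
  rw [Finset.card_insert_of_notMem hjs, hcard] at this
  omega

lemma apply_lt_of_FF_eq {p : Equiv.Perm (Fin n)} {i j : Fin n} (hij : i < j)
    (h : FF p i = FF p j) : p j < p i := by
  rcases lt_trichotomy (p i) (p j) with hlt | heq | hgt
  · exact absurd h (ne_of_lt (FF_lt_FF hij hlt))
  · exact absurd (p.injective heq) (ne_of_lt hij)
  · exact hgt

lemma FF_le_inv (p : Equiv.Perm (Fin n)) (i : Fin n) : FF p i ≤ FF p⁻¹ (p i) := by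
  obtain ⟨s, hs, hcard⟩ := exists_chainEnd_FF p i
  have hchain : IsChainEnd p⁻¹ (p i) (s.image p) := by
    refine ⟨Finset.mem_image_of_mem p hs.1, ?_, ?_⟩
    · intro b hb
      obtain ⟨a, ha, rfl⟩ := Finset.mem_image.1 hb
      rcases eq_or_lt_of_le (hs.2.1 a ha) with rfl | h
      · exact le_rfl
      · exact (hs.2.2 a ha i hs.1 h).le
    · intro x hx y hy hxy
      obtain ⟨a, ha, rfl⟩ := Finset.mem_image.1 hx
      obtain ⟨b, hb, rfl⟩ := Finset.mem_image.1 hy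
      simp only [show ∀ z, p⁻¹ (p z) = z from p.symm_apply_apply]
      rcases lt_trichotomy a b with h | rfl | h
      · exact h
      · exact absurd hxy (lt_irrefl _)
      · exact absurd (hxy.trans (hs.2.2 b hb a ha h)) (lt_irrefl _)
  have := card_le_FF hchain
  rwa [Finset.card_image_of_injective _ p.injective, hcard] at this

lemma FF_inv (p : Equiv.Perm (Fin n)) (i : Fin n) : FF p⁻¹ (p i) = FF p i := by
  refine le_antisymm ?_ (FF_le_inv p i)
  have := FF_le_inv p⁻¹ (p i)
  simpa using this

lemma FF_le_of_avoids {k : ℕ} {p : Equiv.Perm (Fin n)}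
    (h : PermAvoids p (1 : Equiv.Perm (Fin k))) (i : Fin n) : FF p i ≤ k - 1 := by
  by_contra hcon
  push_neg at hcon
  have hk : k ≤ FF p i := by
    rcases Nat.eq_zero_or_pos k with rfl | hk0
    · omega
    · omega
  obtain ⟨s, hs, hcard⟩ := exists_chainEnd_FF p i
  obtain ⟨t, hts, htcard⟩ := Finset.exists_subset_card_eq (hcard ▸ hk)
  apply h
  refine ⟨t.orderEmbOfFin htcard, ?_⟩
  intro j r
  simp only [Equiv.Perm.one_apply]
  constructor
  · intro hjr
    exact hs.2.2 _ (hts (t.orderEmbOfFin_mem htcard j)) _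
      (hts (t.orderEmbOfFin_mem htcard r)) ((t.orderEmbOfFin htcard).strictMono hjr)
  · intro hp
    rcases lt_trichotomy j r with h' | rfl | h'
    · exact h'
    · exact absurd hp (lt_irrefl _)
    · have := hs.2.2 _ (hts (t.orderEmbOfFin_mem htcard r)) _
        (hts (t.orderEmbOfFin_mem htcard j)) ((t.orderEmbOfFin htcard).strictMono h')
      exact absurd (hp.trans this) (lt_irrefl _)

lemma aux_not_lt {p q : Equiv.Perm (Fin n)}
    (hF : ∀ i, FF p i = FF q i) (hG : ∀ v, FF p⁻¹ v = FF q⁻¹ v)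
    (i : Fin n) (IH : ∀ j, j < i → p j = q j) : ¬ p i < q i := by
  intro hlt
  set w := q i with hw
  set j := p⁻¹ w with hj
  have hpj : p j = w := p.apply_symm_apply w
  have hji : j ≠ i := by
    intro h
    rw [h] at hpj
    exact absurd hpj (ne_of_lt hlt)
  rcases lt_or_gt_of_ne hji with hlt' | hgt
  · have := IH j hlt'
    rw [hpj] at this
    exact absurd (q.injective this.symm) hji
  · have h1 : FF p j = FF p i := by
      calc FF p j = FF p⁻¹ (p j) := (FF_inv p j).symm
        _ = FF q⁻¹ w := by rw [hpj]; exact hG w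
        _ = FF q⁻¹ (q i) := by rw [hw]
        _ = FF q i := FF_inv q i
        _ = FF p i := (hF i).symm
    have := apply_lt_of_FF_eq hgt h1.symm
    rw [hpj] at this
    exact absurd (hlt.trans this) (lt_irrefl _)

lemma perm_eq_of_FF_eq {p q : Equiv.Perm (Fin n)}
    (hF : ∀ i, FF p i = FF q i) (hG : ∀ v, FF p⁻¹ v = FF q⁻¹ v) : p = q := by
  have hF' : ∀ i, FF q i = FF p i := fun i => (hF i).symm
  have hG' : ∀ v, FF q⁻¹ v = FF p⁻¹ v := fun v => (hG v).symm
  have key : ∀ m : ℕ, ∀ i : Fin n, (i : ℕ) = m → p i = q i := by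
    intro m
    induction m using Nat.strong_induction_on with
    | _ m ih =>
      intro i him
      have IH : ∀ j, j < i → p j = q j := fun j hj => ih j (him ▸ hj) j rfl
      have IH' : ∀ j, j < i → q j = p j := fun j hj => (IH j hj).symm
      rcases lt_trichotomy (p i) (q i) with h | h | h
      · exact absurd h (aux_not_lt hF hG i IH)
      · exact h
      · exact absurd h (aux_not_lt hF' hG' i IH')
  exact Equiv.ext fun i => key i i rfl

end Aux

theorem sn_monotone_upper_bound (n k : ℕ) (hn : 0 < n) (hk : 2 < k) :
    S n (1 : Equiv.Perm (Fin k)) ≤ (k - 1) ^ (2 * n) := by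
  have hk1 : 0 < k - 1 := by omega
  -- the encoding map
  have havoid_inv : ∀ (p : Equiv.Perm (Fin n)), PermAvoids p (1 : Equiv.Perm (Fin k)) →
      ∀ v : Fin n, FF p⁻¹ v ≤ k - 1 := by
    intro p hp v
    have := FF_le_of_avoids hp (p⁻¹ v)
    rwa [← FF_inv p (p⁻¹ v), show ∀ z, p (p⁻¹ z) = z from p.apply_symm_apply] at this
  let Φ : {p : Equiv.Perm (Fin n) // PermAvoids p (1 : Equiv.Perm (Fin k))} →
      (Fin n → Fin (k - 1)) × (Fin n → Fin (k - 1)) :=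
    fun p => (fun i => ⟨FF p.1 i - 1, by
        have h1 := one_le_FF p.1 i
        have h2 := FF_le_of_avoids p.2 i
        omega⟩,
      fun v => ⟨FF p.1⁻¹ v - 1, by
        have h1 := one_le_FF p.1⁻¹ v
        have h2 := havoid_inv p.1 p.2 v
        omega⟩)
  have hΦ : Function.Injective Φ := by
    intro p q h
    have h1 := congrArg Prod.fst h
    have h2 := congrArg Prod.snd h
    simp only [Φ] at h1 h2
    have hF : ∀ i, FF p.1 i = FF q.1 i := by
      intro i
      have := congrFun h1 i
      rw [Fin.mk.injEq] at this
      have hp1 := one_le_FF p.1 i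
      have hq1 := one_le_FF q.1 i
      omega
    have hG : ∀ v, FF p.1⁻¹ v = FF q.1⁻¹ v := by
      intro v
      have := congrFun h2 v
      rw [Fin.mk.injEq] at this
      have hp1 := one_le_FF p.1⁻¹ v
      have hq1 := one_le_FF q.1⁻¹ v
      omega
    exact Subtype.ext (perm_eq_of_FF_eq hF hG)
  have hcard := Nat.card_le_card_of_injective Φ hΦ
  calc S n (1 : Equiv.Perm (Fin k))
      = Nat.card {p : Equiv.Perm (Fin n) // PermAvoids p (1 : Equiv.Perm (Fin k))} := rfl
    _ ≤ Nat.card ((Fin n → Fin (k - 1)) × (Fin n → Fin (k - 1))) := hcard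
    _ = (k - 1) ^ (2 * n) := by
        simp [Nat.card_eq_fintype_card, two_mul, pow_add]
end

section
/- For all integers n ≥ 7, the strict inequality S_n(1234) < S_n(1324) holds, where S_n(q) counts permutations of length n avoiding the pattern q. -/
/-- The pattern 1324. -/
def p1324 : Equiv.Perm (Fin 4) := Equiv.swap 1 2


section Aux
variable {n k : ℕ}

def LRmin (p : Equiv.Perm (Fin n)) (i : Fin n) : Prop := ∀ j, j < i → p i < p j
def RLmax (p : Equiv.Perm (Fin n)) (i : Fin n) : Prop := ∀ j, i < j → p j < p i
def IsSkel (p : Equiv.Perm (Fin n)) (i : Fin n) : Prop := LRmin p i ∨ RLmax p i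
def Skel (p : Equiv.Perm (Fin n)) : Set (Fin n × Fin n) := {x | IsSkel p x.1 ∧ p x.1 = x.2}

lemma permContains_of_strictMono (p : Equiv.Perm (Fin n)) (q : Equiv.Perm (Fin k))
    (g : Fin k → Fin n) (hg : StrictMono g)
    (h : ∀ j r, q j < q r → p (g j) < p (g r)) : PermContains p q := by
  refine ⟨OrderEmbedding.ofStrictMono g hg, fun j r => ⟨h j r, fun hlt => ?_⟩⟩
  rcases lt_trichotomy (q j) (q r) with h1 | h1 | h1
  · exact h1
  · exact absurd hlt (by rw [q.injective h1]; exact lt_irrefl _)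
  · exact absurd (lt_trans hlt (h r j h1)) (lt_irrefl _)

lemma not_lrmin {p : Equiv.Perm (Fin n)} {i : Fin n} (h : ¬ LRmin p i) :
    ∃ a, a < i ∧ p a < p i := by
  unfold LRmin at h
  push_neg at h
  obtain ⟨j, hj, hj2⟩ := h
  refine ⟨j, hj, lt_of_le_of_ne hj2 ?_⟩
  intro he
  exact absurd (p.injective he) (ne_of_lt hj)

lemma not_rlmax {p : Equiv.Perm (Fin n)} {i : Fin n} (h : ¬ RLmax p i) :
    ∃ d, i < d ∧ p i < p d := by
  unfold RLmax at h
  push_neg at h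
  obtain ⟨j, hj, hj2⟩ := h
  refine ⟨j, hj, lt_of_le_of_ne hj2 ?_⟩
  intro he
  exact absurd (p.injective he) (ne_of_lt hj)

lemma contains1234 (p : Equiv.Perm (Fin n)) {a b c d : Fin n}
    (hab : a < b) (hbc : b < c) (hcd : c < d)
    (h1 : p a < p b) (h2 : p b < p c) (h3 : p c < p d) :
    PermContains p (1 : Equiv.Perm (Fin 4)) := by
  have hg : StrictMono ![a, b, c, d] := by
    intro j r hjr
    fin_cases j <;> fin_cases r <;>
      simp_all [Matrix.cons_val_zero, Matrix.cons_val_one] <;>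
      first
        | exact hab | exact hbc | exact hcd
        | exact lt_trans hab hbc | exact lt_trans hbc hcd
        | exact lt_trans (lt_trans hab hbc) hcd
        | exact absurd hjr (by omega)
  refine permContains_of_strictMono p 1 ![a, b, c, d] hg ?_
  intro j r hjr
  simp only [Equiv.Perm.one_apply] at hjr
  fin_cases j <;> fin_cases r <;>
    simp_all [Matrix.cons_val_zero, Matrix.cons_val_one] <;>
    first
      | exact h1 | exact h2 | exact h3
      | exact lt_trans h1 h2 | exact lt_trans h2 h3
      | exact lt_trans (lt_trans h1 h2) h3
      | exact absurd hjr (by omega)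

lemma contains1324 (p : Equiv.Perm (Fin n)) {a b c d : Fin n}
    (hab : a < b) (hbc : b < c) (hcd : c < d)
    (h1 : p a < p c) (h2 : p c < p b) (h3 : p b < p d) :
    PermContains p p1324 := by
  have hg : StrictMono ![a, b, c, d] := by
    intro j r hjr
    fin_cases j <;> fin_cases r <;>
      simp_all [Matrix.cons_val_zero, Matrix.cons_val_one] <;>
      first
        | exact hab | exact hbc | exact hcd
        | exact lt_trans hab hbc | exact lt_trans hbc hcd
        | exact lt_trans (lt_trans hab hbc) hcd
        | exact absurd hjr (by omega)
  refine permContains_of_strictMono p p1324 ![a, b, c, d] hg ?_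
  intro j r hjr
  fin_cases j <;> fin_cases r <;>
    simp_all [p1324, Matrix.cons_val_zero, Matrix.cons_val_one] <;>
    first
      | exact h1 | exact h2 | exact h3
      | exact lt_trans h1 h2 | exact lt_trans h2 h3
      | exact lt_trans (lt_trans h1 h2) h3
      | exact absurd hjr (by decide)

lemma contains1324_elim {p : Equiv.Perm (Fin n)} (h : PermContains p p1324) :
    ∃ a b c d : Fin n, a < b ∧ b < c ∧ c < d ∧ p a < p c ∧ p c < p b ∧ p b < p d := by
  obtain ⟨f, hf⟩ := h
  refine ⟨f 0, f 1, f 2, f 3, f.strictMono (by decide), f.strictMono (by decide),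
    f.strictMono (by decide), ?_, ?_, ?_⟩
  · exact (hf 0 2).1 (by decide)
  · exact (hf 2 1).1 (by decide)
  · exact (hf 1 3).1 (by decide)

end Aux

section Swap
variable {n : ℕ}

lemma skel_swap (q : Equiv.Perm (Fin n)) (hq : PermContains q p1324) :
    ∃ q' : Equiv.Perm (Fin n), Skel q' = Skel q ∧
      (∑ i : Fin n, (i : ℕ) * (q i : ℕ)) < ∑ i : Fin n, (i : ℕ) * (q' i : ℕ) := by
  obtain ⟨a, b, c, d, hab, hbc, hcd, h1, h2, h3⟩ := contains1324_elim hq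
  set q' : Equiv.Perm (Fin n) := q.trans (Equiv.swap (q b) (q c)) with hq'def
  have hbc' : b ≠ c := ne_of_lt hbc
  have happ : ∀ i : Fin n, q' i = if i = b then q c else if i = c then q b else q i := by
    intro i
    by_cases hib : i = b
    · simp [hq'def, hib, Equiv.swap_apply_left]
    · by_cases hic : i = c
      · simp [hq'def, hib, hic, Ne.symm hbc', Equiv.swap_apply_right]
      · simp [hq'def, hib, hic,
          Equiv.swap_apply_of_ne_of_ne (fun h => hib (q.injective h)) (fun h => hic (q.injective h))]
  have hqb : q' b = q c := by rw [happ]; simp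
  have hqc : q' c = q b := by rw [happ, if_neg (Ne.symm hbc'), if_pos rfl]
  have hother : ∀ i : Fin n, i ≠ b → i ≠ c → q' i = q i := by
    intro i h1 h2; rw [happ]; simp [h1, h2]
  have hanb : a ≠ b := ne_of_lt hab
  have hanc : a ≠ c := ne_of_lt (lt_trans hab hbc)
  have hdnb : d ≠ b := ne_of_gt (lt_trans hbc hcd)
  have hdnc : d ≠ c := ne_of_gt hcd
  have hqa : q' a = q a := hother a hanb hanc
  have hqd : q' d = q d := hother d hdnb hdnc
  -- LRmin equivalence
  have hLR : ∀ i, LRmin q' i ↔ LRmin q i := by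
    intro i
    by_cases hib : i = b
    · subst hib
      constructor
      · intro h; exact absurd (h a hab) (not_lt.2 (le_of_lt (by rw [hqa, hqb]; exact h1)))
      · intro h; exact absurd (h a hab) (not_lt.2 (le_of_lt (lt_trans h1 h2)))
    · by_cases hic : i = c
      · subst hic
        constructor
        · intro h
          exact absurd (h a (lt_trans hab hbc)) (not_lt.2 (le_of_lt (by rw [hqa, hqc]; exact lt_trans h1 h2)))
        · intro h; exact absurd (h a (lt_trans hab hbc)) (not_lt.2 (le_of_lt h1))
      · have hi' : q' i = q i := hother i hib hic
        constructor
        · intro h j hj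
          by_cases hjb : j = b
          · have hb := h j hj
            rw [hjb, hqb, hi'] at hb
            rw [hjb]
            exact lt_trans hb h2
          · by_cases hjc : j = c
            · have ha := h a (lt_trans hab (lt_trans hbc (hjc ▸ hj)))
              rw [hqa, hi'] at ha
              rw [hjc]
              exact lt_trans ha h1
            · have := h j hj; rwa [hi', hother j hjb hjc] at this
        · intro h j hj
          rw [hi']
          by_cases hjb : j = b
          · rw [hjb, hqb]
            exact lt_trans (h a (lt_trans hab (hjb ▸ hj))) h1
          · by_cases hjc : j = c
            · rw [hjc, hqc]
              exact h b (lt_trans hbc (hjc ▸ hj))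
            · rw [hother j hjb hjc]; exact h j hj
  -- RLmax equivalence
  have hRL : ∀ i, RLmax q' i ↔ RLmax q i := by
    intro i
    by_cases hib : i = b
    · subst hib
      constructor
      · intro h
        have := h d (lt_trans hbc hcd)
        rw [hqd, hqb] at this
        exact absurd this (not_lt.2 (le_of_lt (lt_trans h2 h3)))
      · intro h; exact absurd (h d (lt_trans hbc hcd)) (not_lt.2 (le_of_lt h3))
    · by_cases hic : i = c
      · subst hic
        constructor
        · intro h
          have := h d hcd
          rw [hqd, hqc] at this
          exact absurd this (not_lt.2 (le_of_lt h3))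
        · intro h
          exact absurd (h d hcd) (not_lt.2 (le_of_lt (lt_trans h2 h3)))
      · have hi' : q' i = q i := hother i hib hic
        constructor
        · intro h j hj
          by_cases hjb : j = b
          · have hc := h c (lt_trans (hjb ▸ hj) hbc)
            rw [hqc, hi'] at hc
            rw [hjb]
            exact hc
          · by_cases hjc : j = c
            · have hc := h c (hjc ▸ hj)
              rw [hqc, hi'] at hc
              rw [hjc]
              exact lt_trans h2 hc
            · have := h j hj; rwa [hi', hother j hjb hjc] at this
        · intro h j hj
          rw [hi']
          by_cases hjb : j = b
          · rw [hjb, hqb]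
            exact h c (lt_trans (hjb ▸ hj) hbc)
          · by_cases hjc : j = c
            · rw [hjc, hqc]
              exact lt_trans h3 (h d (lt_trans (hjc ▸ hj) hcd))
            · rw [hother j hjb hjc]; exact h j hj
  -- skeleton equal
  have hskel : Skel q' = Skel q := by
    ext x
    obtain ⟨i, v⟩ := x
    simp only [Skel, IsSkel, Set.mem_setOf_eq]
    constructor
    · rintro ⟨hsk, hv⟩
      have hib : i ≠ b := by
        rintro rfl
        rcases hsk with h | h
        · exact absurd (h a hab) (not_lt.2 (le_of_lt (by rw [hqa, hqb]; exact h1)))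
        · have := h d (lt_trans hbc hcd)
          rw [hqd, hqb] at this
          exact absurd this (not_lt.2 (le_of_lt (lt_trans h2 h3)))
      have hic : i ≠ c := by
        rintro rfl
        rcases hsk with h | h
        · exact absurd (h a (lt_trans hab hbc))
            (not_lt.2 (le_of_lt (by rw [hqa, hqc]; exact lt_trans h1 h2)))
        · have := h d hcd
          rw [hqd, hqc] at this
          exact absurd this (not_lt.2 (le_of_lt h3))
      refine ⟨?_, by rw [← hother i hib hic]; exact hv⟩
      rcases hsk with h | h
      · exact Or.inl ((hLR i).1 h)
      · exact Or.inr ((hRL i).1 h)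
    · rintro ⟨hsk, hv⟩
      have hib : i ≠ b := by
        rintro rfl
        rcases hsk with h | h
        · exact absurd (h a hab) (not_lt.2 (le_of_lt (lt_trans h1 h2)))
        · exact absurd (h d (lt_trans hbc hcd)) (not_lt.2 (le_of_lt h3))
      have hic : i ≠ c := by
        rintro rfl
        rcases hsk with h | h
        · exact absurd (h a (lt_trans hab hbc)) (not_lt.2 (le_of_lt h1))
        · exact absurd (h d hcd) (not_lt.2 (le_of_lt (lt_trans h2 h3)))
      refine ⟨?_, by rw [hother i hib hic]; exact hv⟩
      rcases hsk with h | h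
      · exact Or.inl ((hLR i).2 h)
      · exact Or.inr ((hRL i).2 h)
  refine ⟨q', hskel, ?_⟩
  -- sum inequality
  have hsplit : ∀ u : Equiv.Perm (Fin n),
      (∑ i : Fin n, (i : ℕ) * (u i : ℕ)) =
        (∑ i ∈ (Finset.univ.erase b).erase c, (i : ℕ) * (u i : ℕ))
          + (c : ℕ) * (u c : ℕ) + (b : ℕ) * (u b : ℕ) := by
    intro u
    rw [Finset.sum_erase_add _ _ (Finset.mem_erase.2 ⟨hbc'.symm, Finset.mem_univ c⟩),
      Finset.sum_erase_add _ _ (Finset.mem_univ b)]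
  rw [hsplit q, hsplit q']
  have hcong : (∑ i ∈ (Finset.univ.erase b).erase c, (i : ℕ) * (q i : ℕ)) =
      ∑ i ∈ (Finset.univ.erase b).erase c, (i : ℕ) * (q' i : ℕ) := by
    refine Finset.sum_congr rfl fun i hi => ?_
    simp only [Finset.mem_erase] at hi
    rw [hother i hi.2.1 hi.1]
  rw [hcong, hqb, hqc]
  have hblt : (b : ℕ) < (c : ℕ) := hbc
  have hylt : ((q c : Fin n) : ℕ) < ((q b : Fin n) : ℕ) := h2
  have := mul_add_mul_lt_mul_add_mul hblt hylt
  omega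
end Swap

section MaxArg
variable {n : ℕ}

lemma exists_avoid_same_skel (p : Equiv.Perm (Fin n)) :
    ∃ q : Equiv.Perm (Fin n), Skel q = Skel p ∧ PermAvoids q p1324 := by
  classical
  let s : Finset (Equiv.Perm (Fin n)) := Finset.univ.filter (fun q => Skel q = Skel p)
  have hne : s.Nonempty := ⟨p, by simp [s]⟩
  obtain ⟨q, hq, hmax⟩ := s.exists_max_image (fun u => ∑ i : Fin n, (i : ℕ) * (u i : ℕ)) hne
  refine ⟨q, (Finset.mem_filter.1 hq).2, fun hc => ?_⟩
  obtain ⟨q', hsk, hlt⟩ := skel_swap q hc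
  have hq' : q' ∈ s := by
    simp only [s, Finset.mem_filter, Finset.mem_univ, true_and]
    rw [hsk]
    exact (Finset.mem_filter.1 hq).2
  exact absurd (hmax q' hq') (not_le.2 hlt)

end MaxArg

section Unique
variable {n : ℕ}

lemma antiOn_image_unique (f g : Fin n → Fin n) :
    ∀ s : Finset (Fin n),
      (∀ i ∈ s, ∀ j ∈ s, i < j → f j < f i) →
      (∀ i ∈ s, ∀ j ∈ s, i < j → g j < g i) →
      s.image f = s.image g → ∀ i ∈ s, f i = g i := by
  intro s
  induction s using Finset.strongInduction with
  | _ s ih =>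
    intro hf hg him i hi
    have hsne : s.Nonempty := ⟨i, hi⟩
    set m := s.max' hsne with hm
    have hms : m ∈ s := s.max'_mem hsne
    have hfm : ∀ v ∈ s.image f, f m ≤ v := by
      intro v hv
      obtain ⟨j, hj, rfl⟩ := Finset.mem_image.1 hv
      rcases eq_or_lt_of_le (s.le_max' j hj) with h | h
      · rw [h]
      · exact le_of_lt (hf j hj m hms h)
    have hgm : ∀ v ∈ s.image g, g m ≤ v := by
      intro v hv
      obtain ⟨j, hj, rfl⟩ := Finset.mem_image.1 hv
      rcases eq_or_lt_of_le (s.le_max' j hj) with h | h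
      · rw [h]
      · exact le_of_lt (hg j hj m hms h)
    have hfgm : f m = g m := by
      have h1 : f m ≤ g m := hfm (g m) (by rw [him]; exact Finset.mem_image_of_mem g hms)
      have h2 : g m ≤ f m := by
        rw [← him] at hgm
        exact hgm (f m) (Finset.mem_image_of_mem f hms)
      exact le_antisymm h1 h2
    rcases eq_or_ne i m with rfl | him'
    · exact hfgm
    · -- recurse on s.erase m
      have hsub : s.erase m ⊂ s := Finset.erase_ssubset hms
      have hfim : (s.erase m).image f = (s.image f).erase (f m) := by
        ext v
        simp only [Finset.mem_image, Finset.mem_erase]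
        constructor
        · rintro ⟨j, ⟨hjm, hjs⟩, rfl⟩
          have hjlt : j < m := lt_of_le_of_ne (s.le_max' j hjs) hjm
          exact ⟨ne_of_gt (hf j hjs m hms hjlt), j, hjs, rfl⟩
        · rintro ⟨hvm, j, hjs, rfl⟩
          exact ⟨j, ⟨fun h => hvm (by rw [h]), hjs⟩, rfl⟩
      have hgim : (s.erase m).image g = (s.image g).erase (g m) := by
        ext v
        simp only [Finset.mem_image, Finset.mem_erase]
        constructor
        · rintro ⟨j, ⟨hjm, hjs⟩, rfl⟩
          have hjlt : j < m := lt_of_le_of_ne (s.le_max' j hjs) hjm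
          exact ⟨ne_of_gt (hg j hjs m hms hjlt), j, hjs, rfl⟩
        · rintro ⟨hvm, j, hjs, rfl⟩
          exact ⟨j, ⟨fun h => hvm (by rw [h]), hjs⟩, rfl⟩
      have him2 : (s.erase m).image f = (s.erase m).image g := by
        rw [hfim, hgim, him, hfgm]
      exact ih (s.erase m) hsub
        (fun a ha b hb hab => hf a (Finset.mem_of_mem_erase ha) b (Finset.mem_of_mem_erase hb) hab)
        (fun a ha b hb hab => hg a (Finset.mem_of_mem_erase ha) b (Finset.mem_of_mem_erase hb) hab)
        him2 i (Finset.mem_erase.2 ⟨him', hi⟩)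

lemma skel_spec {p q : Equiv.Perm (Fin n)} (h : Skel p = Skel q) :
    ∀ i, (IsSkel p i ↔ IsSkel q i) ∧ (IsSkel p i → p i = q i) := by
  intro i
  constructor
  · constructor
    · intro hs
      have : (i, p i) ∈ Skel q := h ▸ (⟨hs, rfl⟩ : (i, p i) ∈ Skel p)
      exact this.1
    · intro hs
      have : (i, q i) ∈ Skel p := h ▸ (⟨hs, rfl⟩ : (i, q i) ∈ Skel q)
      exact this.1
  · intro hs
    have : (i, p i) ∈ Skel q := h ▸ (⟨hs, rfl⟩ : (i, p i) ∈ Skel p)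
    exact this.2.symm

lemma avoid1234_unique {p q : Equiv.Perm (Fin n)}
    (hp : PermAvoids p (1 : Equiv.Perm (Fin 4)))
    (hq : PermAvoids q (1 : Equiv.Perm (Fin 4)))
    (h : Skel p = Skel q) : p = q := by
  classical
  have hspec := skel_spec h
  set s : Finset (Fin n) := Finset.univ.filter (fun i => ¬ IsSkel p i) with hs
  have hmem : ∀ i, i ∈ s ↔ ¬ IsSkel p i := by
    intro i; simp [hs]
  -- strict antitone of p on s
  have hantip : ∀ i ∈ s, ∀ j ∈ s, i < j → p j < p i := by
    intro i hi j hj hij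
    by_contra hle
    have hij' : p i < p j := by
      rcases lt_or_eq_of_le (not_lt.1 hle) with h' | h'
      · exact h'
      · exact absurd (p.injective h') (ne_of_lt hij)
    have hnl : ¬ LRmin p i := fun hl => ((hmem i).1 hi) (Or.inl hl)
    have hnr : ¬ RLmax p j := fun hr => ((hmem j).1 hj) (Or.inr hr)
    obtain ⟨a, ha, hav⟩ := not_lrmin hnl
    obtain ⟨d, hd, hdv⟩ := not_rlmax hnr
    exact hp (contains1234 p ha hij hd hav hij' hdv)
  have hnskq : ∀ i ∈ s, ¬ IsSkel q i :=
    fun i hi hsk => ((hmem i).1 hi) ((hspec i).1.mpr hsk)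
  have hantiq : ∀ i ∈ s, ∀ j ∈ s, i < j → q j < q i := by
    intro i hi j hj hij
    by_contra hle
    have hij' : q i < q j := by
      rcases lt_or_eq_of_le (not_lt.1 hle) with h' | h'
      · exact h'
      · exact absurd (q.injective h') (ne_of_lt hij)
    have hnl : ¬ LRmin q i := fun hl => hnskq i hi (Or.inl hl)
    have hnr : ¬ RLmax q j := fun hr => hnskq j hj (Or.inr hr)
    obtain ⟨a, ha, hav⟩ := not_lrmin hnl
    obtain ⟨d, hd, hdv⟩ := not_rlmax hnr
    exact hq (contains1234 q ha hij hd hav hij' hdv)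
  have hagree : ∀ i, i ∉ s → p i = q i := by
    intro i hi
    refine (hspec i).2 ?_
    by_contra hns
    exact hi ((hmem i).2 hns)
  -- image equality
  set t : Finset (Fin n) := Finset.univ \ s with ht
  have himt : t.image ⇑p = t.image ⇑q :=
    Finset.image_congr (fun i hi => hagree i (Finset.mem_sdiff.1 hi).2)
  have himgen : ∀ u : Equiv.Perm (Fin n), s.image ⇑u = Finset.univ \ t.image ⇑u := by
    intro u
    have hsub : s.image ⇑u ⊆ Finset.univ \ t.image ⇑u := by
      intro v hv
      obtain ⟨i, hi, rfl⟩ := Finset.mem_image.1 hv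
      refine Finset.mem_sdiff.2 ⟨Finset.mem_univ _, fun hc => ?_⟩
      obtain ⟨j, hj, hji⟩ := Finset.mem_image.1 hc
      have : j = i := u.injective hji
      subst this
      exact (Finset.mem_sdiff.1 hj).2 hi
    refine Finset.eq_of_subset_of_card_le hsub ?_
    have h1 : (s.image ⇑u).card = s.card := Finset.card_image_of_injective s u.injective
    have h2 : (t.image ⇑u).card = t.card := Finset.card_image_of_injective t u.injective
    have h3 : (Finset.univ \ t.image ⇑u).card = (Finset.univ : Finset (Fin n)).card - t.card := by
      rw [Finset.card_sdiff_of_subset (Finset.subset_univ (t.image ⇑u)), h2]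
    have h4 : t.card = (Finset.univ : Finset (Fin n)).card - s.card :=
      Finset.card_sdiff_of_subset (Finset.subset_univ s)
    have h5 : s.card ≤ (Finset.univ : Finset (Fin n)).card := Finset.card_le_card (Finset.subset_univ s)
    omega
  have him : s.image ⇑p = s.image ⇑q := by
    rw [himgen p, himgen q, himt]
  have hons : ∀ i ∈ s, p i = q i := antiOn_image_unique ⇑p ⇑q s hantip hantiq him
  refine Equiv.ext fun i => ?_
  by_cases hi : i ∈ s
  · exact hons i hi
  · exact hagree i hi

end Unique

section Witness

/-- Extend a 7-permutation by prepending a decreasing run of the `n-7` largest values. -/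
def extFun (w : Fin 7 → Fin 7) (n : ℕ) (hn : 7 ≤ n) : Fin n → Fin n := fun i =>
  if h : (i : ℕ) < n - 7 then ⟨n - 1 - (i : ℕ), by omega⟩
  else ⟨(w ⟨(i : ℕ) - (n - 7), by omega⟩ : ℕ), by
    have := (w ⟨(i : ℕ) - (n - 7), by omega⟩).isLt; omega⟩

lemma extFun_inj (w : Fin 7 → Fin 7) (hw : Function.Injective w) (n : ℕ) (hn : 7 ≤ n) :
    Function.Injective (extFun w n hn) := by
  intro i j hij
  unfold extFun at hij
  by_cases hi : (i : ℕ) < n - 7 <;> by_cases hj : (j : ℕ) < n - 7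
  · rw [dif_pos hi, dif_pos hj] at hij
    have := congrArg Fin.val hij
    simp only at this
    exact Fin.ext (by omega)
  · rw [dif_pos hi, dif_neg hj] at hij
    have := congrArg Fin.val hij
    simp only at this
    have h7 := (w ⟨(j : ℕ) - (n - 7), by omega⟩).isLt
    omega
  · rw [dif_neg hi, dif_pos hj] at hij
    have := congrArg Fin.val hij
    simp only at this
    have h7 := (w ⟨(i : ℕ) - (n - 7), by omega⟩).isLt
    omega
  · rw [dif_neg hi, dif_neg hj] at hij
    have := congrArg Fin.val hij
    simp only at this
    have := hw (Fin.ext this)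
    have := congrArg Fin.val this
    simp only at this
    exact Fin.ext (by omega)

/-- The extended permutation. -/
noncomputable def extPerm (w : Fin 7 → Fin 7) (hw : Function.Injective w) (n : ℕ) (hn : 7 ≤ n) :
    Equiv.Perm (Fin n) :=
  Equiv.ofBijective (extFun w n hn)
    ((Fintype.bijective_iff_injective_and_card _).2 ⟨extFun_inj w hw n hn, rfl⟩)

lemma extPerm_lt (w : Fin 7 → Fin 7) (hw : Function.Injective w) (n : ℕ) (hn : 7 ≤ n)
    {i : Fin n} (h : (i : ℕ) < n - 7) :
    ((extPerm w hw n hn i : Fin n) : ℕ) = n - 1 - (i : ℕ) := by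
  show ((extFun w n hn i : Fin n) : ℕ) = _
  unfold extFun
  rw [dif_pos h]

lemma extPerm_ge (w : Fin 7 → Fin 7) (hw : Function.Injective w) (n : ℕ) (hn : 7 ≤ n)
    {i : Fin n} (h : ¬ (i : ℕ) < n - 7) :
    ((extPerm w hw n hn i : Fin n) : ℕ)
      = (w ⟨(i : ℕ) - (n - 7), by have := i.isLt; omega⟩ : ℕ) := by
  show ((extFun w n hn i : Fin n) : ℕ) = _
  unfold extFun
  rw [dif_neg h]

lemma extPerm_ge' (w : Fin 7 → Fin 7) (hw : Function.Injective w) (n : ℕ) (hn : 7 ≤ n)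
    {i : Fin n} (h : ¬ (i : ℕ) < n - 7) {j : Fin 7} (hj : (j : ℕ) = (i : ℕ) - (n - 7)) :
    ((extPerm w hw n hn i : Fin n) : ℕ) = (w j : ℕ) := by
  have hje : j = ⟨(i : ℕ) - (n - 7), by have := j.isLt; omega⟩ := Fin.ext hj
  rw [extPerm_ge w hw n hn h, hje]

lemma extPerm_lt_big (w : Fin 7 → Fin 7) (hw : Function.Injective w) (n : ℕ) (hn : 7 ≤ n)
    {i : Fin n} (h : (i : ℕ) < n - 7) :
    7 ≤ ((extPerm w hw n hn i : Fin n) : ℕ) := by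
  rw [extPerm_lt w hw n hn h]
  omega

lemma extPerm_ge_small (w : Fin 7 → Fin 7) (hw : Function.Injective w) (n : ℕ) (hn : 7 ≤ n)
    {i : Fin n} (h : ¬ (i : ℕ) < n - 7) :
    ((extPerm w hw n hn i : Fin n) : ℕ) < 7 := by
  rw [extPerm_ge w hw n hn h]
  exact (w _).isLt

/-- The base 7-permutation. -/
noncomputable def basePerm (w : Fin 7 → Fin 7) (hw : Function.Injective w) : Equiv.Perm (Fin 7) :=
  Equiv.ofBijective w ((Fintype.bijective_iff_injective_and_card _).2 ⟨hw, rfl⟩)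

lemma basePerm_apply (w : Fin 7 → Fin 7) (hw : Function.Injective w) (j : Fin 7) :
    basePerm w hw j = w j := rfl


set_option maxHeartbeats 400000 in
lemma extPerm_avoids (w : Fin 7 → Fin 7) (hw : Function.Injective w) (n : ℕ) (hn : 7 ≤ n)
    (ha : PermAvoids (basePerm w hw) p1324) : PermAvoids (extPerm w hw n hn) p1324 := by
  intro hcon
  obtain ⟨a, b, c, d, hab, hbc, hcd, h1, h2, h3⟩ := contains1324_elim hcon
  have hage : ¬ (a : ℕ) < n - 7 := by
    intro halt
    by_cases hblt : (b : ℕ) < n - 7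
    · have hv1 : ((extPerm w hw n hn a : Fin n) : ℕ) = n - 1 - (a : ℕ) := extPerm_lt w hw n hn halt
      have hv2 : ((extPerm w hw n hn b : Fin n) : ℕ) = n - 1 - (b : ℕ) := extPerm_lt w hw n hn hblt
      have hlt : extPerm w hw n hn a < extPerm w hw n hn b := lt_trans h1 h2
      have hlt' : ((extPerm w hw n hn a : Fin n) : ℕ) < ((extPerm w hw n hn b : Fin n) : ℕ) := hlt
      have hab' : (a : ℕ) < (b : ℕ) := hab
      omega
    · have hv1 := extPerm_lt_big w hw n hn halt
      have hv2 := extPerm_ge_small w hw n hn hblt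
      have hlt : extPerm w hw n hn a < extPerm w hw n hn b := lt_trans h1 h2
      have hlt' : ((extPerm w hw n hn a : Fin n) : ℕ) < ((extPerm w hw n hn b : Fin n) : ℕ) := hlt
      omega
  have hbge : ¬ (b : ℕ) < n - 7 := by
    have : (a : ℕ) < (b : ℕ) := hab
    omega
  have hcge : ¬ (c : ℕ) < n - 7 := by
    have : (b : ℕ) < (c : ℕ) := hbc
    omega
  have hdge : ¬ (d : ℕ) < n - 7 := by
    have : (c : ℕ) < (d : ℕ) := hcd
    omega
  have hna := a.isLt
  have hnb := b.isLt
  have hnc := c.isLt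
  have hnd := d.isLt
  obtain ⟨a', ha'⟩ : ∃ j : Fin 7, (j : ℕ) = (a : ℕ) - (n - 7) := ⟨⟨(a : ℕ) - (n - 7), by omega⟩, rfl⟩
  obtain ⟨b', hb'⟩ : ∃ j : Fin 7, (j : ℕ) = (b : ℕ) - (n - 7) := ⟨⟨(b : ℕ) - (n - 7), by omega⟩, rfl⟩
  obtain ⟨c', hc'⟩ : ∃ j : Fin 7, (j : ℕ) = (c : ℕ) - (n - 7) := ⟨⟨(c : ℕ) - (n - 7), by omega⟩, rfl⟩
  obtain ⟨d', hd'⟩ : ∃ j : Fin 7, (j : ℕ) = (d : ℕ) - (n - 7) := ⟨⟨(d : ℕ) - (n - 7), by omega⟩, rfl⟩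
  have hva : ((extPerm w hw n hn a : Fin n) : ℕ) = (w a' : ℕ) := extPerm_ge' w hw n hn hage ha'
  have hvb : ((extPerm w hw n hn b : Fin n) : ℕ) = (w b' : ℕ) := extPerm_ge' w hw n hn hbge hb'
  have hvc : ((extPerm w hw n hn c : Fin n) : ℕ) = (w c' : ℕ) := extPerm_ge' w hw n hn hcge hc'
  have hvd : ((extPerm w hw n hn d : Fin n) : ℕ) = (w d' : ℕ) := extPerm_ge' w hw n hn hdge hd'
  have hab7 : a' < b' := by
    have : (a : ℕ) < (b : ℕ) := hab
    rw [Fin.lt_def, ha', hb']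
    omega
  have hbc7 : b' < c' := by
    have : (b : ℕ) < (c : ℕ) := hbc
    rw [Fin.lt_def, hb', hc']
    omega
  have hcd7 : c' < d' := by
    have : (c : ℕ) < (d : ℕ) := hcd
    rw [Fin.lt_def, hc', hd']
    omega
  have hw1 : basePerm w hw a' < basePerm w hw c' := by
    rw [basePerm_apply, basePerm_apply, Fin.lt_def]
    have h1' : ((extPerm w hw n hn a : Fin n) : ℕ) < ((extPerm w hw n hn c : Fin n) : ℕ) := h1
    omega
  have hw2 : basePerm w hw c' < basePerm w hw b' := by
    rw [basePerm_apply, basePerm_apply, Fin.lt_def]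
    have h2' : ((extPerm w hw n hn c : Fin n) : ℕ) < ((extPerm w hw n hn b : Fin n) : ℕ) := h2
    omega
  have hw3 : basePerm w hw b' < basePerm w hw d' := by
    rw [basePerm_apply, basePerm_apply, Fin.lt_def]
    have h3' : ((extPerm w hw n hn b : Fin n) : ℕ) < ((extPerm w hw n hn d : Fin n) : ℕ) := h3
    omega
  exact ha (contains1324 (basePerm w hw) hab7 hbc7 hcd7 hw1 hw2 hw3)

section SkelTransfer

lemma extPerm_lrmin_iff (w : Fin 7 → Fin 7) (hw : Function.Injective w) (n : ℕ) (hn : 7 ≤ n)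
    {i : Fin n} (h : ¬ (i : ℕ) < n - 7) {j : Fin 7} (hj : (j : ℕ) = (i : ℕ) - (n - 7)) :
    LRmin (extPerm w hw n hn) i ↔ LRmin (basePerm w hw) j := by
  have hni := i.isLt
  constructor
  · intro hL t ht
    obtain ⟨u, hu⟩ : ∃ u : Fin n, (u : ℕ) = (t : ℕ) + (n - 7) :=
      ⟨⟨(t : ℕ) + (n - 7), by have := t.isLt; omega⟩, rfl⟩
    have htj : (t : ℕ) < (j : ℕ) := ht
    have hui : u < i := by rw [Fin.lt_def]; omega
    have := hL u hui
    rw [Fin.lt_def] at this ⊢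
    rw [basePerm_apply, basePerm_apply]
    rw [extPerm_ge' w hw n hn h hj,
      extPerm_ge' w hw n hn (by omega) (j := t) (by omega)] at this
    exact this
  · intro hB t ht
    have hti : (t : ℕ) < (i : ℕ) := ht
    rw [Fin.lt_def]
    by_cases h2 : (t : ℕ) < n - 7
    · have := extPerm_ge_small w hw n hn h
      have := extPerm_lt_big w hw n hn h2
      omega
    · obtain ⟨t', ht'⟩ : ∃ t' : Fin 7, (t' : ℕ) = (t : ℕ) - (n - 7) :=
        ⟨⟨(t : ℕ) - (n - 7), by have := t.isLt; omega⟩, rfl⟩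
      have h3 : t' < j := by rw [Fin.lt_def]; omega
      have := hB t' h3
      rw [basePerm_apply, basePerm_apply, Fin.lt_def] at this
      rw [extPerm_ge' w hw n hn h hj, extPerm_ge' w hw n hn h2 ht']
      exact this

lemma extPerm_rlmax_iff (w : Fin 7 → Fin 7) (hw : Function.Injective w) (n : ℕ) (hn : 7 ≤ n)
    {i : Fin n} (h : ¬ (i : ℕ) < n - 7) {j : Fin 7} (hj : (j : ℕ) = (i : ℕ) - (n - 7)) :
    RLmax (extPerm w hw n hn) i ↔ RLmax (basePerm w hw) j := by
  have hni := i.isLt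
  constructor
  · intro hR t ht
    obtain ⟨u, hu⟩ : ∃ u : Fin n, (u : ℕ) = (t : ℕ) + (n - 7) :=
      ⟨⟨(t : ℕ) + (n - 7), by have := t.isLt; omega⟩, rfl⟩
    have htj : (j : ℕ) < (t : ℕ) := ht
    have hui : i < u := by rw [Fin.lt_def]; omega
    have := hR u hui
    rw [Fin.lt_def] at this ⊢
    rw [basePerm_apply, basePerm_apply]
    rw [extPerm_ge' w hw n hn h hj,
      extPerm_ge' w hw n hn (i := u) (by omega) (j := t) (by omega)] at this
    exact this
  · intro hB t ht
    have hti : (i : ℕ) < (t : ℕ) := ht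
    rw [Fin.lt_def]
    have h2 : ¬ (t : ℕ) < n - 7 := by omega
    obtain ⟨t', ht'⟩ : ∃ t' : Fin 7, (t' : ℕ) = (t : ℕ) - (n - 7) :=
      ⟨⟨(t : ℕ) - (n - 7), by have := t.isLt; omega⟩, rfl⟩
    have h3 : j < t' := by rw [Fin.lt_def]; omega
    have := hB t' h3
    rw [basePerm_apply, basePerm_apply, Fin.lt_def] at this
    rw [extPerm_ge' w hw n hn h hj, extPerm_ge' w hw n hn h2 ht']
    exact this

lemma extPerm_prefix_rlmax (w : Fin 7 → Fin 7) (hw : Function.Injective w) (n : ℕ) (hn : 7 ≤ n)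
    {i : Fin n} (h : (i : ℕ) < n - 7) : RLmax (extPerm w hw n hn) i := by
  intro t ht
  have hti : (i : ℕ) < (t : ℕ) := ht
  rw [Fin.lt_def]
  have hvi := extPerm_lt w hw n hn h
  by_cases h2 : (t : ℕ) < n - 7
  · have hvt := extPerm_lt w hw n hn h2
    omega
  · have hvt := extPerm_ge_small w hw n hn h2
    omega

lemma extPerm_skel_eq (w w' : Fin 7 → Fin 7) (hw : Function.Injective w)
    (hw' : Function.Injective w') (n : ℕ) (hn : 7 ≤ n)
    (h7 : ∀ j : Fin 7, (IsSkel (basePerm w hw) j ↔ IsSkel (basePerm w' hw') j) ∧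
      (IsSkel (basePerm w hw) j → basePerm w hw j = basePerm w' hw' j)) :
    Skel (extPerm w hw n hn) = Skel (extPerm w' hw' n hn) := by
  ext x
  obtain ⟨i, v⟩ := x
  simp only [Skel, IsSkel, Set.mem_setOf_eq]
  by_cases h : (i : ℕ) < n - 7
  · have e1 : extPerm w hw n hn i = extPerm w' hw' n hn i := by
      refine Fin.ext ?_
      rw [extPerm_lt w hw n hn h, extPerm_lt w' hw' n hn h]
    have s1 := extPerm_prefix_rlmax w hw n hn h
    have s2 := extPerm_prefix_rlmax w' hw' n hn h
    constructor
    · rintro ⟨_, hv⟩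
      exact ⟨Or.inr s2, by rw [← e1]; exact hv⟩
    · rintro ⟨_, hv⟩
      exact ⟨Or.inr s1, by rw [e1]; exact hv⟩
  · obtain ⟨j, hj⟩ : ∃ j : Fin 7, (j : ℕ) = (i : ℕ) - (n - 7) :=
      ⟨⟨(i : ℕ) - (n - 7), by have := i.isLt; omega⟩, rfl⟩
    have l1 := extPerm_lrmin_iff w hw n hn h hj
    have r1 := extPerm_rlmax_iff w hw n hn h hj
    have l2 := extPerm_lrmin_iff w' hw' n hn h hj
    have r2 := extPerm_rlmax_iff w' hw' n hn h hj
    have hvv : IsSkel (basePerm w hw) j →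
        extPerm w hw n hn i = extPerm w' hw' n hn i := by
      intro hsj
      have hval := (h7 j).2 hsj
      refine Fin.ext ?_
      rw [extPerm_ge' w hw n hn h hj, extPerm_ge' w' hw' n hn h hj]
      rw [basePerm_apply, basePerm_apply] at hval
      exact congrArg Fin.val hval
    constructor
    · rintro ⟨hs, hv⟩
      have hsj : IsSkel (basePerm w hw) j := by
        rcases hs with h' | h'
        · exact Or.inl (l1.1 h')
        · exact Or.inr (r1.1 h')
      have hsj' : IsSkel (basePerm w' hw') j := (h7 j).1.1 hsj
      refine ⟨?_, by rw [← hvv hsj]; exact hv⟩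
      rcases hsj' with h' | h'
      · exact Or.inl (l2.2 h')
      · exact Or.inr (r2.2 h')
    · rintro ⟨hs, hv⟩
      have hsj' : IsSkel (basePerm w' hw') j := by
        rcases hs with h' | h'
        · exact Or.inl (l2.1 h')
        · exact Or.inr (r2.1 h')
      have hsj : IsSkel (basePerm w hw) j := (h7 j).1.2 hsj'
      refine ⟨?_, by rw [hvv hsj]; exact hv⟩
      rcases hsj with h' | h'
      · exact Or.inl (l1.2 h')
      · exact Or.inr (r1.2 h')

end SkelTransfer

section Base7

instance {n : ℕ} (p : Equiv.Perm (Fin n)) (i : Fin n) : Decidable (LRmin p i) :=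
  decidable_of_iff (∀ j, j < i → p i < p j) Iff.rfl

instance {n : ℕ} (p : Equiv.Perm (Fin n)) (i : Fin n) : Decidable (RLmax p i) :=
  decidable_of_iff (∀ j, i < j → p j < p i) Iff.rfl

instance {n : ℕ} (p : Equiv.Perm (Fin n)) (i : Fin n) : Decidable (IsSkel p i) :=
  decidable_of_iff (LRmin p i ∨ RLmax p i) Iff.rfl

lemma contains1324_iff {n : ℕ} (p : Equiv.Perm (Fin n)) :
    PermContains p p1324 ↔ ∃ a b c d : Fin n,
      a < b ∧ b < c ∧ c < d ∧ p a < p c ∧ p c < p b ∧ p b < p d := by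
  constructor
  · exact contains1324_elim
  · rintro ⟨a, b, c, d, hab, hbc, hcd, h1, h2, h3⟩
    exact contains1324 p hab hbc hcd h1 h2 h3

def w1fun : Fin 7 → Fin 7 := ![2, 3, 0, 5, 6, 1, 4]
def w2fun : Fin 7 → Fin 7 := ![2, 5, 0, 1, 6, 3, 4]

lemma w1inj : Function.Injective w1fun := by decide
lemma w2inj : Function.Injective w2fun := by decide

set_option maxRecDepth 4000 in
lemma avoid7_1 : PermAvoids (basePerm w1fun w1inj) p1324 := by
  rw [PermAvoids, contains1324_iff]
  decide

set_option maxRecDepth 4000 in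
lemma avoid7_2 : PermAvoids (basePerm w2fun w2inj) p1324 := by
  rw [PermAvoids, contains1324_iff]
  decide

lemma skel7 : ∀ j : Fin 7,
    (IsSkel (basePerm w1fun w1inj) j ↔ IsSkel (basePerm w2fun w2inj) j) ∧
    (IsSkel (basePerm w1fun w1inj) j → basePerm w1fun w1inj j = basePerm w2fun w2inj j) := by
  decide

end Base7

lemma ext_ne (n : ℕ) (hn : 7 ≤ n) : extPerm w1fun w1inj n hn ≠ extPerm w2fun w2inj n hn := by
  intro h
  obtain ⟨i, hi⟩ : ∃ i : Fin n, (i : ℕ) = n - 6 := ⟨⟨n - 6, by omega⟩, rfl⟩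
  have hge : ¬ (i : ℕ) < n - 7 := by omega
  have hj : ((1 : Fin 7) : ℕ) = (i : ℕ) - (n - 7) := by
    rw [hi]
    norm_num
    omega
  have h1 : ((extPerm w1fun w1inj n hn i : Fin n) : ℕ) = (w1fun 1 : ℕ) :=
    extPerm_ge' w1fun w1inj n hn hge hj
  have h2 : ((extPerm w2fun w2inj n hn i : Fin n) : ℕ) = (w2fun 1 : ℕ) :=
    extPerm_ge' w2fun w2inj n hn hge hj
  rw [h] at h1
  rw [h1] at h2
  have : (w2fun 1 : ℕ) = 5 := by decide
  have h4 : (w1fun 1 : ℕ) = 3 := by decide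
  omega

set_option maxHeartbeats 1000000 in
theorem sn_1234_lt_sn_1324' (n : ℕ) (hn : 7 ≤ n) :
    Nat.card {p : Equiv.Perm (Fin n) // PermAvoids p (1 : Equiv.Perm (Fin 4))}
      < Nat.card {p : Equiv.Perm (Fin n) // PermAvoids p p1324} := by
  classical
  set G : Set (Fin n × Fin n) → Equiv.Perm (Fin n) := fun t =>
    if h : ∃ q : Equiv.Perm (Fin n), Skel q = t ∧ PermAvoids q p1324 then h.choose else 1
    with hGdef
  have hGs : ∀ p : Equiv.Perm (Fin n),
      Skel (G (Skel p)) = Skel p ∧ PermAvoids (G (Skel p)) p1324 := by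
    intro p
    have h : ∃ q, Skel q = Skel p ∧ PermAvoids q p1324 := exists_avoid_same_skel p
    simp only [hGdef, dif_pos h]
    exact h.choose_spec
  set F : {p : Equiv.Perm (Fin n) // PermAvoids p (1 : Equiv.Perm (Fin 4))} →
      {p : Equiv.Perm (Fin n) // PermAvoids p p1324} :=
    fun p => ⟨G (Skel p.1), (hGs p.1).2⟩ with hFdef
  have hFinj : Function.Injective F := by
    intro x y hxy
    have h1 : G (Skel x.1) = G (Skel y.1) := congrArg Subtype.val hxy
    have h2 : Skel x.1 = Skel y.1 := by
      rw [← (hGs x.1).1, ← (hGs y.1).1, h1]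
    exact Subtype.ext (avoid1234_unique x.2 y.2 h2)
  have hske : Skel (extPerm w1fun w1inj n hn) = Skel (extPerm w2fun w2inj n hn) :=
    extPerm_skel_eq w1fun w2fun w1inj w2inj n hn skel7
  have hne := ext_ne n hn
  have hav1 : PermAvoids (extPerm w1fun w1inj n hn) p1324 :=
    extPerm_avoids w1fun w1inj n hn avoid7_1
  have hav2 : PermAvoids (extPerm w2fun w2inj n hn) p1324 :=
    extPerm_avoids w2fun w2inj n hn avoid7_2
  have hmiss : ∃ bb : {p : Equiv.Perm (Fin n) // PermAvoids p p1324},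
      bb ∉ Set.range F := by
    by_cases hu : G (Skel (extPerm w1fun w1inj n hn)) = extPerm w1fun w1inj n hn
    · refine ⟨⟨extPerm w2fun w2inj n hn, hav2⟩, ?_⟩
      rintro ⟨⟨p, hp⟩, hFp⟩
      have hv : G (Skel p) = extPerm w2fun w2inj n hn := congrArg Subtype.val hFp
      have hsp : Skel p = Skel (extPerm w2fun w2inj n hn) := by
        rw [← (hGs p).1, hv]
      rw [← hske] at hsp
      rw [hsp, hu] at hv
      exact hne hv
    · refine ⟨⟨extPerm w1fun w1inj n hn, hav1⟩, ?_⟩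
      rintro ⟨⟨p, hp⟩, hFp⟩
      have hv : G (Skel p) = extPerm w1fun w1inj n hn := congrArg Subtype.val hFp
      have hsp : Skel p = Skel (extPerm w1fun w1inj n hn) := by
        rw [← (hGs p).1, hv]
      rw [hsp] at hv
      exact hu hv
  obtain ⟨bb, hbb⟩ := hmiss
  haveI : Fintype {p : Equiv.Perm (Fin n) // PermAvoids p (1 : Equiv.Perm (Fin 4))} :=
    Fintype.ofFinite _
  haveI : Fintype {p : Equiv.Perm (Fin n) // PermAvoids p p1324} :=
    Fintype.ofFinite _
  rw [Nat.card_eq_fintype_card, Nat.card_eq_fintype_card]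
  exact Fintype.card_lt_of_injective_of_notMem F hFinj hbb

theorem sn_1234_lt_sn_1324 (n : ℕ) (hn : 7 ≤ n) :
    S n (1 : Equiv.Perm (Fin 4)) < S n p1324 :=
  sn_1234_lt_sn_1324' n hn
end Witness
end

section
/- For all positive integers n, S_n(1234) ≤ S_n(1324), where S_n(q) counts permutations of length n avoiding q as a classical pattern. -/
section Aux

variable {n : ℕ}

/-- `t` has a smaller entry to its left. -/
def RedL (q : Equiv.Perm (Fin n)) (t : Fin n) : Prop := ∃ s, s < t ∧ q s < q t

/-- `t` has a larger entry to its right. -/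
def RedU (q : Equiv.Perm (Fin n)) (t : Fin n) : Prop := ∃ s, t < s ∧ q t < q s

/-- `t` is red: smaller entry to the left and larger entry to the right. -/
def IsRed (q : Equiv.Perm (Fin n)) (t : Fin n) : Prop := RedL q t ∧ RedU q t

open Classical in
/-- The skeleton: values at non-red (green) positions. -/
noncomputable def skel (q : Equiv.Perm (Fin n)) : Fin n → Option (Fin n) :=
  fun t => if IsRed q t then none else some (q t)

lemma red_iff_of_skel_eq {q q' : Equiv.Perm (Fin n)} (h : skel q = skel q') (t : Fin n) :
    IsRed q t ↔ IsRed q' t := by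
  have := congrFun h t
  unfold skel at this
  by_cases h1 : IsRed q t <;> by_cases h2 : IsRed q' t <;> simp_all

lemma green_val_of_skel_eq {q q' : Equiv.Perm (Fin n)} (h : skel q = skel q') {t : Fin n}
    (hg : ¬ IsRed q t) : q t = q' t := by
  have := congrFun h t
  have hg' : ¬ IsRed q' t := fun hr => hg ((red_iff_of_skel_eq h t).2 hr)
  unfold skel at this
  simp [hg, hg'] at this
  exact this

/-- From a monotone transport we get the iff condition. -/
lemma iff_of_mono {k : ℕ} (q : Equiv.Perm (Fin k)) (w : Fin k → Fin n)
    (h : ∀ j r, q j < q r → w j < w r) : ∀ j r, q j < q r ↔ w j < w r := by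
  intro j r
  refine ⟨h j r, fun hw => ?_⟩
  rcases lt_trichotomy (q j) (q r) with h1 | h1 | h1
  · exact h1
  · exact absurd (q.injective h1 ▸ hw) (lt_irrefl _)
  · exact absurd (h r j h1) (not_lt.2 hw.le)

lemma strictMono4 {i0 i1 i2 i3 : Fin n} (h01 : i0 < i1) (h12 : i1 < i2) (h23 : i2 < i3) :
    StrictMono ![i0, i1, i2, i3] := by
  have h02 := h01.trans h12
  have h13 := h12.trans h23
  have h03 := h01.trans h13
  intro a b hab
  fin_cases a <;> fin_cases b <;>
    first
      | exact absurd hab (by decide)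
      | simpa using h01
      | simpa using h12
      | simpa using h23
      | simpa using h02
      | simpa using h13
      | simpa using h03

lemma contains_1234 (p : Equiv.Perm (Fin n)) {i0 i1 i2 i3 : Fin n}
    (h01 : i0 < i1) (h12 : i1 < i2) (h23 : i2 < i3)
    (v01 : p i0 < p i1) (v12 : p i1 < p i2) (v23 : p i2 < p i3) :
    PermContains p (1 : Equiv.Perm (Fin 4)) := by
  have v02 := v01.trans v12
  have v13 := v12.trans v23
  have v03 := v01.trans v13
  refine ⟨OrderEmbedding.ofStrictMono _ (strictMono4 h01 h12 h23), ?_⟩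
  apply iff_of_mono
  intro j r hjr
  simp only [Equiv.Perm.one_apply] at hjr
  fin_cases j <;> fin_cases r <;>
    first
      | exact absurd hjr (by decide)
      | simpa using v01
      | simpa using v12
      | simpa using v23
      | simpa using v02
      | simpa using v13
      | simpa using v03

lemma contains_1324 (p : Equiv.Perm (Fin n)) {i0 i1 i2 i3 : Fin n}
    (h01 : i0 < i1) (h12 : i1 < i2) (h23 : i2 < i3)
    (va : p i0 < p i2) (vb : p i2 < p i1) (vc : p i1 < p i3) :
    PermContains p p1324 := by
  have v01 : p i0 < p i1 := va.trans vb
  have v23 : p i2 < p i3 := vb.trans vc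
  have v03 : p i0 < p i3 := v01.trans vc
  refine ⟨OrderEmbedding.ofStrictMono _ (strictMono4 h01 h12 h23), ?_⟩
  apply iff_of_mono
  intro j r hjr
  fin_cases j <;> fin_cases r <;>
    first
      | exact absurd hjr (by decide)
      | simpa using va
      | simpa using vb
      | simpa using vc
      | simpa using v01
      | simpa using v23
      | simpa using v03

/-- In a 1234-avoiding permutation, red entries form a decreasing subsequence. -/
lemma red_decreasing {p : Equiv.Perm (Fin n)} (hp : PermAvoids p (1 : Equiv.Perm (Fin 4)))
    {i j : Fin n} (hij : i < j) (hi : IsRed p i) (hj : IsRed p j) : p j < p i := by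
  by_contra h
  push_neg at h
  have hne : p i ≠ p j := fun e => absurd (p.injective e) hij.ne
  have hlt : p i < p j := lt_of_le_of_ne h hne
  obtain ⟨⟨a, hai, hav⟩, -⟩ := hi
  obtain ⟨-, ⟨d, hjd, hdv⟩⟩ := hj
  exact hp (contains_1234 p hai hij hjd hav hlt hdv)

/-- Skeleton determines a 1234-avoiding permutation. -/
lemma aux_lt {p p' : Equiv.Perm (Fin n)} (hp : PermAvoids p (1 : Equiv.Perm (Fin 4)))
    (h : skel p = skel p') (t : Fin n) (ih : ∀ s, s < t → p s = p' s)
    (hlt : p t < p' t) : False := by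
  have hredt : IsRed p t := by
    by_contra hg
    exact absurd (green_val_of_skel_eq h hg) hlt.ne
  set j := p.symm (p' t) with hj
  have hpj : p j = p' t := p.apply_symm_apply _
  have hjt : j ≠ t := by
    intro e
    rw [e] at hpj
    exact absurd hpj hlt.ne
  have hredj : IsRed p j := by
    by_contra hg
    have := green_val_of_skel_eq h hg
    have : p' j = p' t := by rw [← this, hpj]
    exact hjt (p'.injective this)
  rcases lt_or_gt_of_ne hjt with hlt2 | hlt2
  · have := ih j hlt2
    have : p' j = p' t := by rw [← this, hpj]
    exact hjt (p'.injective this)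
  · have := red_decreasing hp hlt2 hredt hredj
    rw [hpj] at this
    exact absurd hlt (not_lt.2 this.le)

lemma eq_of_skel_eq {p p' : Equiv.Perm (Fin n)} (hp : PermAvoids p (1 : Equiv.Perm (Fin 4)))
    (hp' : PermAvoids p' (1 : Equiv.Perm (Fin 4))) (h : skel p = skel p') : p = p' := by
  classical
  by_contra hne
  have hs : (Finset.univ.filter fun t => p t ≠ p' t).Nonempty := by
    rw [Finset.filter_nonempty_iff]
    by_contra hc
    push_neg at hc
    exact hne (Equiv.ext fun t => hc t (Finset.mem_univ t))
  set s := Finset.univ.filter fun t => p t ≠ p' t with hsdef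
  set t := s.min' hs with htdef
  have ht : p t ≠ p' t := (Finset.mem_filter.1 (s.min'_mem hs)).2
  have ih : ∀ j, j < t → p j = p' j := by
    intro j hj
    by_contra hc
    exact absurd (s.min'_le j (by simp [hsdef, hc])) (not_le.2 hj)
  rcases lt_or_gt_of_ne ht with hlt | hlt
  · exact aux_lt hp h t ih hlt
  · exact aux_lt hp' h.symm t (fun j hj => (ih j hj).symm) hlt

/-- Potential function. -/
def pot (q : Equiv.Perm (Fin n)) : ℕ := ∑ t : Fin n, (t : ℕ) * (q t : ℕ)

lemma swap_step {q : Equiv.Perm (Fin n)} (h : PermContains q p1324) :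
    ∃ q' : Equiv.Perm (Fin n), skel q' = skel q ∧ pot q < pot q' := by
  classical
  obtain ⟨f, hf⟩ := h
  have m01 : f 0 < f 1 := f.strictMono (by decide)
  have m12 : f 1 < f 2 := f.strictMono (by decide)
  have m23 : f 2 < f 3 := f.strictMono (by decide)
  -- values: q f0 < q f2 < q f1 < q f3
  have va : q (f 0) < q (f 2) := (hf 0 2).1 (by decide)
  have vb : q (f 2) < q (f 1) := (hf 2 1).1 (by decide)
  have vc : q (f 1) < q (f 3) := (hf 1 3).1 (by decide)
  set u := f 1 with hu
  set v := f 2 with hv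
  have huv : u ≠ v := m12.ne
  set q' : Equiv.Perm (Fin n) := q * Equiv.swap u v with hq'def
  have hq'u : q' u = q v := by simp [hq'def, Equiv.swap_apply_left]
  have hq'v : q' v = q u := by simp [hq'def, Equiv.swap_apply_right]
  have hq'o : ∀ t, t ≠ u → t ≠ v → q' t = q t := by
    intro t h1 h2
    simp [hq'def, Equiv.swap_apply_of_ne_of_ne h1 h2]
  -- abbreviations
  have haB : q (f 0) < q v := va
  have hBC : q v < q u := vb
  have hCd : q u < q (f 3) := vc
  have hf0u : f 0 < u := m01
  have huv' : u < v := m12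
  have hvf3 : v < f 3 := m23
  have hf0v : f 0 < v := hf0u.trans huv'
  have huf3 : u < f 3 := huv'.trans hvf3
  -- red preservation
  have red_iff : ∀ t, IsRed q' t ↔ IsRed q t := by
    intro t
    rcases eq_or_ne t u with rfl | htu
    · constructor
      · intro _
        exact ⟨⟨f 0, hf0u, haB.trans hBC⟩, ⟨f 3, huf3, hCd⟩⟩
      · intro _
        refine ⟨⟨f 0, hf0u, ?_⟩, ⟨v, huv', ?_⟩⟩
        · rw [hq'o (f 0) hf0u.ne (hf0v.ne), hq'u]; exact haB
        · rw [hq'u, hq'v]; exact hBC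
    rcases eq_or_ne t v with rfl | htv
    · constructor
      · intro _
        exact ⟨⟨f 0, hf0v, haB⟩, ⟨f 3, hvf3, hBC.trans hCd⟩⟩
      · intro _
        refine ⟨⟨u, huv', ?_⟩, ⟨f 3, hvf3, ?_⟩⟩
        · rw [hq'u, hq'v]; exact hBC
        · rw [hq'v, hq'o (f 3) huf3.ne' hvf3.ne']; exact hCd
    -- t ∉ {u, v}
    have hqt : q' t = q t := hq'o t htu htv
    rcases lt_trichotomy t u with htlt | rfl | htgt
    · -- t < u < v
      have htv' : t < v := htlt.trans huv'
      constructor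
      · rintro ⟨⟨s, hst, hsv⟩, ⟨s', hts', hsv'⟩⟩
        refine ⟨⟨s, hst, ?_⟩, ?_⟩
        · rwa [hq'o s (hst.trans htlt).ne (hst.trans htv').ne, hqt] at hsv
        · rcases eq_or_ne s' u with rfl | h1
          · exact ⟨v, htv', by rwa [hq'u, hqt] at hsv'⟩
          rcases eq_or_ne s' v with rfl | h2
          · exact ⟨u, htlt, by rwa [hq'v, hqt] at hsv'⟩
          · exact ⟨s', hts', by rwa [hq'o s' h1 h2, hqt] at hsv'⟩
      · rintro ⟨⟨s, hst, hsv⟩, ⟨s', hts', hsv'⟩⟩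
        refine ⟨⟨s, hst, ?_⟩, ?_⟩
        · rwa [← hqt, ← hq'o s (hst.trans htlt).ne (hst.trans htv').ne] at hsv
        · rcases eq_or_ne s' u with rfl | h1
          · exact ⟨v, htv', by rwa [← hqt, ← hq'v] at hsv'⟩
          rcases eq_or_ne s' v with rfl | h2
          · exact ⟨u, htlt, by rwa [← hqt, ← hq'u] at hsv'⟩
          · exact ⟨s', hts', by rwa [← hqt, ← hq'o s' h1 h2] at hsv'⟩
    · exact absurd rfl htu
    rcases lt_trichotomy t v with htlt | rfl | htgt'
    · -- u < t < v
      constructor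
      · rintro ⟨⟨s, hst, hsv⟩, ⟨s', hts', hsv'⟩⟩
        constructor
        · rcases eq_or_ne s u with rfl | h1
          · -- q' u = q v = B < q' t = q t ; use a = q (f 0) < B < q t
            rw [hq'u, hqt] at hsv
            exact ⟨f 0, hf0u.trans htgt, haB.trans hsv⟩
          · have h2 : s ≠ v := (hst.trans htlt).ne
            exact ⟨s, hst, by rwa [hq'o s h1 h2, hqt] at hsv⟩
        · rcases eq_or_ne s' v with rfl | h2
          · rw [hq'v, hqt] at hsv'
            exact ⟨f 3, htlt.trans hvf3, hsv'.trans hCd⟩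
          · have h1 : s' ≠ u := (htgt.trans hts').ne'
            exact ⟨s', hts', by rwa [hq'o s' h1 h2, hqt] at hsv'⟩
      · rintro ⟨⟨s, hst, hsv⟩, ⟨s', hts', hsv'⟩⟩
        constructor
        · rcases eq_or_ne s u with rfl | h1
          · -- q u = C > q t? we know q u > q v; witness: f 0 with a < B < C... need a < q t.
            -- from hsv : q u < q t; then q v < q u < q t, so use u with q' u = q v
            exact ⟨u, htgt, by rw [hq'u, hqt]; exact hBC.trans hsv⟩
          · have h2 : s ≠ v := (hst.trans htlt).ne
            exact ⟨s, hst, by rwa [← hqt, ← hq'o s h1 h2] at hsv⟩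
        · rcases eq_or_ne s' v with rfl | h2
          · -- hsv' : q t < q v; then q t < q v < q u = q' v
            exact ⟨v, htlt, by rw [hq'v, hqt]; exact hsv'.trans hBC⟩
          · have h1 : s' ≠ u := (htgt.trans hts').ne'
            exact ⟨s', hts', by rwa [← hqt, ← hq'o s' h1 h2] at hsv'⟩
    · exact absurd rfl htv
    · -- v < t
      have hut : u < t := huv'.trans htgt'
      constructor
      · rintro ⟨⟨s, hst, hsv⟩, ⟨s', hts', hsv'⟩⟩
        refine ⟨?_, ⟨s', hts', ?_⟩⟩
        · rcases eq_or_ne s u with rfl | h1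
          · exact ⟨v, htgt', by rwa [hq'u, hqt] at hsv⟩
          rcases eq_or_ne s v with rfl | h2
          · exact ⟨u, hut, by rwa [hq'v, hqt] at hsv⟩
          · exact ⟨s, hst, by rwa [hq'o s h1 h2, hqt] at hsv⟩
        · rwa [hq'o s' (hut.trans hts').ne' (htgt'.trans hts').ne', hqt] at hsv'
      · rintro ⟨⟨s, hst, hsv⟩, ⟨s', hts', hsv'⟩⟩
        refine ⟨?_, ⟨s', hts', ?_⟩⟩
        · rcases eq_or_ne s u with rfl | h1
          · exact ⟨v, htgt', by rw [hq'v, hqt]; exact hsv⟩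
          rcases eq_or_ne s v with rfl | h2
          · exact ⟨u, hut, by rw [hq'u, hqt]; exact hsv⟩
          · exact ⟨s, hst, by rwa [← hqt, ← hq'o s h1 h2] at hsv⟩
        · rwa [← hqt, ← hq'o s' (hut.trans hts').ne' (htgt'.trans hts').ne'] at hsv'
  refine ⟨q', ?_, ?_⟩
  · funext t
    unfold skel
    by_cases hr : IsRed q t
    · simp [hr, (red_iff t).2 hr]
    · have hr' : ¬ IsRed q' t := fun hc => hr ((red_iff t).1 hc)
      have hne1 : t ≠ u := by
        rintro rfl
        exact hr ⟨⟨f 0, hf0u, haB.trans hBC⟩, ⟨f 3, huf3, hCd⟩⟩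
      have hne2 : t ≠ v := by
        rintro rfl
        exact hr ⟨⟨f 0, hf0v, haB⟩, ⟨f 3, hvf3, hBC.trans hCd⟩⟩
      simp [hr, hr', hq'o t hne1 hne2]
  · -- potential increases
    unfold pot
    have huu : u ∈ Finset.univ := Finset.mem_univ u
    have hvv : v ∈ (Finset.univ.erase u) := Finset.mem_erase.2 ⟨huv.symm, Finset.mem_univ v⟩
    have key : ∀ (g : Equiv.Perm (Fin n)), ∑ t : Fin n, (t : ℕ) * (g t : ℕ) =
        (∑ t ∈ (Finset.univ.erase u).erase v, (t : ℕ) * (g t : ℕ)) + (v : ℕ) * (g v : ℕ)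
          + (u : ℕ) * (g u : ℕ) := by
      intro g
      rw [Finset.sum_erase_add _ _ hvv, Finset.sum_erase_add _ _ huu]
    rw [key q, key q']
    have hrest : ∑ t ∈ (Finset.univ.erase u).erase v, (t : ℕ) * (q t : ℕ) =
        ∑ t ∈ (Finset.univ.erase u).erase v, (t : ℕ) * (q' t : ℕ) := by
      apply Finset.sum_congr rfl
      intro t ht
      rw [Finset.mem_erase] at ht
      obtain ⟨h2, h3⟩ := ht
      rw [Finset.mem_erase] at h3
      rw [hq'o t h3.1 h2]
    rw [← hrest, hq'u, hq'v]
    have h1 : (u : ℕ) < (v : ℕ) := huv'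
    have h2 : (q v : ℕ) < (q u : ℕ) := hBC
    nlinarith [Nat.sub_pos_of_lt h1, Nat.sub_pos_of_lt h2]

open Classical in
lemma exists_1324_avoider (p : Equiv.Perm (Fin n)) :
    ∃ q : Equiv.Perm (Fin n), skel q = skel p ∧ PermAvoids q p1324 := by
  classical
  obtain ⟨q, hq, hmax⟩ := Finset.exists_max_image
    (Finset.univ.filter fun q : Equiv.Perm (Fin n) => skel q = skel p) pot
    ⟨p, by simp⟩
  refine ⟨q, (Finset.mem_filter.1 hq).2, fun hc => ?_⟩
  obtain ⟨q', hs, hlt⟩ := swap_step hc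
  have hmem : q' ∈ Finset.univ.filter fun q : Equiv.Perm (Fin n) => skel q = skel p := by
    simp only [Finset.mem_filter, Finset.mem_univ, true_and]
    rw [hs]
    exact (Finset.mem_filter.1 hq).2
  have := hmax q' hmem
  omega

end Aux

theorem sn_1234_le_sn_1324 (n : ℕ) (hn : 0 < n) :
    S n (1 : Equiv.Perm (Fin 4)) ≤ S n p1324 := by
  classical
  choose Φ hskel havoid using
    fun p : {p : Equiv.Perm (Fin n) // PermAvoids p (1 : Equiv.Perm (Fin 4))} =>
      exists_1324_avoider p.1
  apply Nat.card_le_card_of_injective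
    (fun p : {p : Equiv.Perm (Fin n) // PermAvoids p (1 : Equiv.Perm (Fin 4))} =>
      (⟨Φ p, havoid p⟩ : {q : Equiv.Perm (Fin n) // PermAvoids q p1324}))
  intro p1 p2 hΦ
  have h1 : Φ p1 = Φ p2 := congrArg Subtype.val hΦ
  have hs : skel p1.1 = skel p2.1 := by rw [← hskel p1, h1, hskel p2]
  exact Subtype.ext (eq_of_skel_eq p1.2 p2.2 hs)
end
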